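/- arXiv:2109.06622 — 4 statements merged into one kernel-verified Lean document; each statement's English description precedes it below -/
import Mathlib

section
/- In any optimal solution of the generalized flow linear program (P) (maximize z subject to: for each u ≠ t, outflow(u) − Σ_{b into u} π_b φ_b ≤ w_u; outflow(t) − Σ_{b into t} π_b φ_b = w_t − z; φ ≥ 0), sending ε > 0 units of flow along an st-path P' whose reliability (product of multipliers) is strictly smaller than that of a most reliable st-path P cannot occur: rerouting ε units from P' to P strictly increases the flow arriving at t, hence strictly increases z. Therefore any optimal solution routes, for every s ≠ t, its supply along most reliable st-paths only. -/
open scoped Classical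

def IsPath {V : Type*} (adj : V → V → Prop) : V → V → List V → Prop
  | _, _, [] => False
  | s, t, [a] => a = s ∧ a = t
  | s, t, a :: b :: p => a = s ∧ adj a b ∧ IsPath adj b t (b :: p)

noncomputable def pathRel {V : Type*} (π : V → V → ℝ) : List V → ℝ
  | [] => 1
  | [_] => 1
  | a :: b :: p => π a b * pathRel π (b :: p)

noncomputable def conn {V : Type*} (adj : V → V → Prop) (π : V → V → ℝ) (s t : V) : ℝ :=
  sSup ({x | ∃ p, IsPath adj s t p ∧ pathRel π p = x} ∪ {0})

lemma pathRel_pos_le {V : Type*} (adj : V → V → Prop) (π : V → V → ℝ)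
    (hπ : ∀ a b, adj a b → 0 < π a b ∧ π a b ≤ 1) :
    ∀ (p : List V) (s t : V), IsPath adj s t p →
      0 < pathRel π p ∧ pathRel π p ≤ 1 := by
  intro p
  induction p with
  | nil => intro s t h; exact h.elim
  | cons a q ih =>
    cases q with
    | nil => intro s t _; simp [pathRel]
    | cons b r =>
      intro s t h
      obtain ⟨-, hab, hrest⟩ := h
      have h1 := hπ a b hab
      have h2 := ih b t hrest
      refine ⟨by simpa [pathRel] using mul_pos h1.1 h2.1, ?_⟩
      have : π a b * pathRel π (b :: r) ≤ 1 * 1 :=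
        mul_le_mul h1.2 h2.2 h2.1.le zero_le_one
      simpa [pathRel] using this

/-- In the generalized-flow program `(P)` with sink `t` (written here in path-flow form:
`g s` is a finitely supported assignment of nonnegative flow amounts to `st`-paths, the
supply routed from each `s` is at most `w_s`, and the objective — the flow arriving at `t` —
is `Σ_s Σ_p (g s p) · rel(p)`), any optimal solution routes flow along most reliable
paths only: rerouting `ε > 0` units from a path of strictly smaller reliability to a most
reliable path would strictly increase the objective. Hence at optimality every path
carrying positive flow from `s` has reliability `Π_{st}`. -/
theorem stmt_2 {V : Type*} [Fintype V] (adj : V → V → Prop) (π : V → V → ℝ) (w : V → ℝ)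
    (hπ : ∀ a b, adj a b → 0 < π a b ∧ π a b ≤ 1) (hw : ∀ v, 0 ≤ w v) (t : V)
    (g : V → (List V →₀ ℝ))
    (hg0 : ∀ s p, 0 ≤ g s p)
    (hgpath : ∀ s p, g s p ≠ 0 → IsPath adj s t p)
    (hsupply : ∀ s, ((g s).sum fun _ y => y) ≤ w s)
    (hopt : ∀ g' : V → (List V →₀ ℝ),
      (∀ s p, 0 ≤ g' s p) →
      (∀ s p, g' s p ≠ 0 → IsPath adj s t p) →
      (∀ s, ((g' s).sum fun _ y => y) ≤ w s) →
      (∑ s : V, (g' s).sum fun p y => y * pathRel π p)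
        ≤ ∑ s : V, (g s).sum fun p y => y * pathRel π p) :
    ∀ s p, g s p ≠ 0 → pathRel π p = conn adj π s t := by
  intro s p hgp
  have hpath : IsPath adj s t p := hgpath s p hgp
  have hpos := pathRel_pos_le adj π hπ p s t hpath
  have hbdd : BddAbove ({x | ∃ p, IsPath adj s t p ∧ pathRel π p = x} ∪ {0}) := by
    refine ⟨1, ?_⟩
    rintro x (⟨q, hq, rfl⟩ | rfl)
    · exact (pathRel_pos_le adj π hπ q s t hq).2
    · exact zero_le_one
  have hne : ({x | ∃ p, IsPath adj s t p ∧ pathRel π p = x} ∪ {0} : Set ℝ).Nonempty :=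
    ⟨0, Or.inr rfl⟩
  have hle : pathRel π p ≤ conn adj π s t :=
    le_csSup hbdd (Or.inl ⟨p, hpath, rfl⟩)
  by_contra hne'
  have hlt : pathRel π p < conn adj π s t := lt_of_le_of_ne hle hne'
  obtain ⟨x, hxS, hx⟩ := exists_lt_of_lt_csSup hne hlt
  rcases hxS with ⟨q, hq, rfl⟩ | rfl
  swap
  · exact absurd hx (not_lt.2 hpos.1.le)
  -- Now pathRel π p < pathRel π q, q an st-path.  Reroute all flow from p to q.
  set c : ℝ := g s p with hc
  have hcpos : 0 < c := lt_of_le_of_ne (hg0 s p) (Ne.symm hgp)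
  have hpq : p ≠ q := by
    intro h; rw [h] at hx; exact lt_irrefl _ hx
  set f : List V →₀ ℝ := g s + Finsupp.single q c - Finsupp.single p c with hf
  have hfval : ∀ r, f r = g s r + (Finsupp.single q c) r - (Finsupp.single p c) r := by
    intro r; simp [hf]
  set g' : V → (List V →₀ ℝ) := Function.update g s f with hg'
  have hg'eq : g' s = f := by simp [hg']
  have hg'ne : ∀ v, v ≠ s → g' v = g v := by
    intro v hv; simp [hg', Function.update_of_ne hv]
  have hsingle_ne : ∀ (a b : List V) (d : ℝ), a ≠ b → (Finsupp.single a d : List V →₀ ℝ) b = 0 := by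
    intro a b d h
    rw [Finsupp.single_apply, if_neg h]
  have hg'0 : ∀ v r, 0 ≤ g' v r := by
    intro v r
    by_cases hv : v = s
    · rw [hv, hg'eq, hfval]
      by_cases hrq : r = q
      · rw [hrq, Finsupp.single_eq_same, hsingle_ne p q c hpq]
        have := hg0 s q
        linarith
      · rw [hsingle_ne q r c (fun h => hrq h.symm)]
        by_cases hrp : r = p
        · rw [hrp, Finsupp.single_eq_same]
          simp [hc]
        · rw [hsingle_ne p r c (fun h => hrp h.symm)]
          have := hg0 s r
          linarith
    · rw [hg'ne v hv]; exact hg0 v r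
  have hg'path : ∀ v r, g' v r ≠ 0 → IsPath adj v t r := by
    intro v r hvr
    by_cases hv : v = s
    · rw [hv, hg'eq, hfval] at hvr
      rw [hv]
      by_cases hrq : r = q
      · rw [hrq]; exact hq
      · by_cases hrp : r = p
        · exfalso; apply hvr
          rw [hrp, Finsupp.single_eq_same, hsingle_ne q p c (fun h => hpq h.symm)]
          simp [hc]
        · apply hgpath
          rw [hsingle_ne q r c (fun h => hrq h.symm),
            hsingle_ne p r c (fun h => hrp h.symm)] at hvr
          simpa using hvr
    · rw [hg'ne v hv] at hvr
      exact hgpath v r hvr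
  -- sums of f
  have hfsum : ∀ (r : List V → ℝ),
      (f.sum fun a y => y * r a) = ((g s).sum fun a y => y * r a) + c * r q - c * r p := by
    intro r
    rw [hf]
    rw [Finsupp.sum_sub_index (by intro a b₁ b₂; ring)]
    rw [Finsupp.sum_add_index' (by intro a; ring) (by intro a b₁ b₂; ring)]
    rw [Finsupp.sum_single_index (by ring), Finsupp.sum_single_index (by ring)]
  have hsupply' : ∀ v, ((g' v).sum fun _ y => y) ≤ w v := by
    intro v
    by_cases hv : v = s
    · rw [hv, hg'eq]
      calc (f.sum fun _ y => y) = (f.sum fun a y => y * 1) := by simp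
        _ = ((g s).sum fun a y => y * 1) + c * 1 - c * 1 := hfsum (fun _ => 1)
        _ = ((g s).sum fun _ y => y) := by simp
        _ ≤ w s := hsupply s
    · rw [hg'ne v hv]; exact hsupply v
  -- objective strictly increases
  have hkey := hopt g' hg'0 hg'path hsupply'
  have hobj : (∑ v : V, (g' v).sum fun a y => y * pathRel π a)
      = (∑ v : V, (g v).sum fun a y => y * pathRel π a)
        + (c * pathRel π q - c * pathRel π p) := by
    have hsplit : ∀ (G : V → (List V →₀ ℝ)),
        (∑ v : V, (G v).sum fun a y => y * pathRel π a)
          = ((G s).sum fun a y => y * pathRel π a)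
            + ∑ v ∈ Finset.univ.erase s, (G v).sum fun a y => y * pathRel π a := by
      intro G
      rw [← Finset.add_sum_erase _ _ (Finset.mem_univ s)]
    rw [hsplit g', hsplit g]
    have h1 : ∑ v ∈ Finset.univ.erase s, ((g' v).sum fun a y => y * pathRel π a)
        = ∑ v ∈ Finset.univ.erase s, ((g v).sum fun a y => y * pathRel π a) := by
      apply Finset.sum_congr rfl
      intro v hv
      rw [hg'ne v (Finset.ne_of_mem_erase hv)]
    rw [h1, hg'eq, hfsum (fun a => pathRel π a)]
    ring
  have hgain : 0 < c * pathRel π q - c * pathRel π p := by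
    have : c * pathRel π p < c * pathRel π q := (mul_lt_mul_iff_right₀ hcpos).2 hx
    linarith
  rw [hobj] at hkey
  linarith
end

section
/- The optimal value of the linear program (P) — maximize z subject to Σ_{a∈δ⁺(u)} φ_a − Σ_{b∈δ⁻(u)} π_b φ_b ≤ w_u for all u ≠ t, Σ_{a∈δ⁺(t)} φ_a − Σ_{b∈δ⁻(t)} π_b φ_b = w_t − z, and φ_a ≥ 0 — equals f^t := Σ_{s∈V} w_s · Π_{st}, where Π_{st} is the maximum over st-paths of the product of arc probabilities (Π_{tt}=1). -/
open scoped Classical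

section Aux

variable {V : Type*} {adj : V → V → Prop} {π : V → V → ℝ} {t : V}

lemma isPath_head {s : V} {p : List V} (h : IsPath adj s t p) : ∃ q, p = s :: q := by
  match p, h with
  | [a], ⟨h1, _⟩ => exact ⟨[], by rw [h1]⟩
  | a :: b :: q, ⟨h1, _, _⟩ => exact ⟨b :: q, by rw [h1]⟩

lemma pathRel_bounds (hπ : ∀ a b, adj a b → 0 < π a b ∧ π a b ≤ 1) :
    ∀ {s : V} {p : List V}, IsPath adj s t p → 0 < pathRel π p ∧ pathRel π p ≤ 1 := by
  intro s p
  induction p generalizing s with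
  | nil => exact fun h => h.elim
  | cons a q ih =>
    match q with
    | [] => exact fun _ => by simp [pathRel]
    | b :: r =>
      rintro ⟨rfl, hab, hp⟩
      have h1 := hπ _ _ hab
      have h2 := ih (s := b) hp
      refine ⟨mul_pos h1.1 h2.1, ?_⟩
      calc π a b * pathRel π (b :: r) ≤ 1 * 1 :=
            mul_le_mul h1.2 h2.2 h2.1.le zero_le_one
        _ = 1 := one_mul 1

lemma bddAbove_connSet (hπ : ∀ a b, adj a b → 0 < π a b ∧ π a b ≤ 1) (s : V) :
    BddAbove ({x | ∃ p, IsPath adj s t p ∧ pathRel π p = x} ∪ {0}) := by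
  refine ⟨1, ?_⟩
  rintro x (⟨p, hp, rfl⟩ | rfl)
  · exact (pathRel_bounds hπ hp).2
  · exact zero_le_one

lemma conn_nonneg (hπ : ∀ a b, adj a b → 0 < π a b ∧ π a b ≤ 1) (s : V) :
    0 ≤ conn adj π s t :=
  le_csSup (bddAbove_connSet hπ s) (Or.inr rfl)

lemma conn_le_one (hπ : ∀ a b, adj a b → 0 < π a b ∧ π a b ≤ 1) (s : V) :
    conn adj π s t ≤ 1 := by
  refine csSup_le ⟨0, Or.inr rfl⟩ ?_
  rintro x (⟨p, hp, rfl⟩ | rfl)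
  · exact (pathRel_bounds hπ hp).2
  · exact zero_le_one

lemma conn_self (hπ : ∀ a b, adj a b → 0 < π a b ∧ π a b ≤ 1) :
    conn adj π t t = 1 := by
  refine le_antisymm (conn_le_one hπ t) ?_
  have : (1 : ℝ) ∈ ({x | ∃ p, IsPath adj t t p ∧ pathRel π p = x} ∪ {0}) :=
    Or.inl ⟨[t], ⟨rfl, rfl⟩, rfl⟩
  exact le_csSup (bddAbove_connSet hπ t) this

lemma bellman (hπ : ∀ a b, adj a b → 0 < π a b ∧ π a b ≤ 1) {u v : V} (h : adj u v) :
    π u v * conn adj π v t ≤ conn adj π u t := by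
  have hpos := (hπ u v h).1
  have key : conn adj π v t ≤ conn adj π u t / π u v := by
    refine csSup_le ⟨0, Or.inr rfl⟩ ?_
    rintro x (⟨p, hp, rfl⟩ | rfl)
    · rw [le_div_iff₀ hpos]
      obtain ⟨q, rfl⟩ := isPath_head hp
      have hmem : π u v * pathRel π (v :: q) ∈
          ({x | ∃ p, IsPath adj u t p ∧ pathRel π p = x} ∪ {0}) :=
        Or.inl ⟨u :: v :: q, ⟨rfl, h, hp⟩, rfl⟩
      calc pathRel π (v :: q) * π u v = π u v * pathRel π (v :: q) := mul_comm _ _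
        _ ≤ conn adj π u t := le_csSup (bddAbove_connSet hπ u) hmem
    · rw [le_div_iff₀ hpos, zero_mul]
      exact conn_nonneg hπ u
  calc π u v * conn adj π v t ≤ π u v * (conn adj π u t / π u v) :=
        mul_le_mul_of_nonneg_left key hpos.le
    _ = conn adj π u t := by field_simp

end Aux

section Aux2
variable {V : Type*} {adj : V → V → Prop} {π : V → V → ℝ} {t : V}

lemma exists_suffix (hπ : ∀ a b, adj a b → 0 < π a b ∧ π a b ≤ 1) {x : V} :
    ∀ {s : V} {p : List V}, IsPath adj s t p → x ∈ p →
      ∃ r, r <:+ p ∧ IsPath adj x t r ∧ pathRel π p ≤ pathRel π r := by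
  intro s p
  induction p generalizing s with
  | nil => exact fun h => h.elim
  | cons a q ih =>
    match q with
    | [] =>
      rintro ⟨rfl, rfl⟩ hx
      rw [List.mem_singleton] at hx
      exact ⟨[a], List.suffix_refl _, ⟨hx.symm, rfl⟩, le_refl _⟩
    | b :: r =>
      rintro ⟨rfl, hab, hp⟩ hx
      by_cases hxa : x = a
      · exact ⟨a :: b :: r, List.suffix_refl _, by subst hxa; exact ⟨rfl, hab, hp⟩, le_refl _⟩
      · have hx' : x ∈ b :: r := by
          rcases List.mem_cons.1 hx with h | h
          · exact absurd h hxa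
          · exact h
        obtain ⟨r', hsuf, hpath, hle⟩ := ih (s := b) hp hx'
        refine ⟨r', hsuf.trans (List.suffix_cons a _), hpath, ?_⟩
        have hpos := (pathRel_bounds hπ hp).1
        calc pathRel π (a :: b :: r) = π a b * pathRel π (b :: r) := rfl
          _ ≤ pathRel π (b :: r) := mul_le_of_le_one_left hpos.le (hπ _ _ hab).2
          _ ≤ pathRel π r' := hle

lemma toNodup (hπ : ∀ a b, adj a b → 0 < π a b ∧ π a b ≤ 1) :
    ∀ {s : V} {p : List V}, IsPath adj s t p →
      ∃ q, IsPath adj s t q ∧ q.Nodup ∧ pathRel π p ≤ pathRel π q := by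
  intro s p
  induction p generalizing s with
  | nil => exact fun h => h.elim
  | cons a q ih =>
    match q with
    | [] =>
      rintro ⟨rfl, rfl⟩
      exact ⟨[a], ⟨rfl, rfl⟩, List.nodup_singleton a, le_refl _⟩
    | b :: r =>
      rintro ⟨rfl, hab, hp⟩
      obtain ⟨q', hq', hnd, hle⟩ := ih (s := b) hp
      obtain ⟨q'', rfl⟩ := isPath_head hq'
      have hposbr := (pathRel_bounds hπ hp).1
      have hstep : pathRel π (a :: b :: r) ≤ pathRel π (b :: q'') := by
        calc pathRel π (a :: b :: r) = π a b * pathRel π (b :: r) := rfl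
          _ ≤ pathRel π (b :: r) := mul_le_of_le_one_left hposbr.le (hπ _ _ hab).2
          _ ≤ pathRel π (b :: q'') := hle
      by_cases hmem : a ∈ b :: q''
      · obtain ⟨r', hsuf, hpath, hle2⟩ := exists_suffix hπ hq' hmem
        exact ⟨r', hpath, hnd.sublist hsuf.sublist, hstep.trans hle2⟩
      · refine ⟨a :: b :: q'', ⟨rfl, hab, hq'⟩, ?_, ?_⟩
        · exact List.nodup_cons.2 ⟨hmem, hnd⟩
        · calc pathRel π (a :: b :: r) = π a b * pathRel π (b :: r) := rfl
            _ ≤ π a b * pathRel π (b :: q'') :=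
              mul_le_mul_of_nonneg_left hle (hπ _ _ hab).1.le
            _ = pathRel π (a :: b :: q'') := rfl

lemma conn_attained [Fintype V] (hπ : ∀ a b, adj a b → 0 < π a b ∧ π a b ≤ 1) (s : V) :
    conn adj π s t = 0 ∨ ∃ p, IsPath adj s t p ∧ pathRel π p = conn adj π s t := by
  by_cases hex : ∃ p, IsPath adj s t p
  · right
    obtain ⟨p₀, hp₀⟩ := hex
    obtain ⟨q₀, hq₀, hnd₀, _⟩ := toNodup hπ hp₀
    set S₀ : Set ℝ := {x | ∃ p, IsPath adj s t p ∧ p.Nodup ∧ pathRel π p = x} with hS₀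
    have hfin : S₀.Finite := by
      have h1 : {l : List V | l.Nodup}.Finite :=
        (List.finite_length_le V (Fintype.card V)).subset fun l hl => hl.length_le_card
      refine (h1.image (pathRel π)).subset ?_
      rintro x ⟨p, _, hnd, rfl⟩
      exact ⟨p, hnd, rfl⟩
    have hne : S₀.Nonempty := ⟨_, q₀, hq₀, hnd₀, rfl⟩
    obtain ⟨q, hq, hqnd, hqval⟩ := hne.csSup_mem hfin
    refine ⟨q, hq, le_antisymm ?_ ?_⟩
    · exact le_csSup (bddAbove_connSet hπ s) (Or.inl ⟨q, hq, rfl⟩)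
    · refine csSup_le ⟨0, Or.inr rfl⟩ ?_
      rintro x (⟨p, hp, rfl⟩ | rfl)
      · obtain ⟨q', hq', hnd', hle'⟩ := toNodup hπ hp
        calc pathRel π p ≤ pathRel π q' := hle'
          _ ≤ sSup S₀ := le_csSup hfin.bddAbove ⟨q', hq', hnd', rfl⟩
          _ = pathRel π q := hqval.symm
      · exact (pathRel_bounds hπ hq).1.le
  · left
    have : ({x | ∃ p, IsPath adj s t p ∧ pathRel π p = x} ∪ {0} : Set ℝ) = {0} := by
      ext x
      constructor
      · rintro (⟨p, hp, rfl⟩ | rfl)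
        · exact absurd ⟨p, hp⟩ hex
        · rfl
      · rintro rfl; exact Or.inr rfl
    rw [conn, this, csSup_singleton]

end Aux2
noncomputable def pathFlow {V : Type*} (π : V → V → ℝ) : List V → ℝ → V → V → ℝ
  | [], _ => fun _ _ => 0
  | [_], _ => fun _ _ => 0
  | a :: b :: p, c => fun x y =>
      (if x = a ∧ y = b then c else 0) + pathFlow π (b :: p) (c * π a b) x y

section Aux3
variable {V : Type*} {adj : V → V → Prop} {π : V → V → ℝ} {t : V}

lemma pathFlow_nonneg (hπ : ∀ a b, adj a b → 0 < π a b ∧ π a b ≤ 1) :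
    ∀ {s : V} {p : List V} {c : ℝ}, IsPath adj s t p → 0 ≤ c →
      ∀ x y, 0 ≤ pathFlow π p c x y := by
  intro s p
  induction p generalizing s with
  | nil => intro c h; exact h.elim
  | cons a q ih =>
    match q with
    | [] => intro c _ _ x y; simp [pathFlow]
    | b :: r =>
      rintro c ⟨rfl, hab, hp⟩ hc x y
      refine add_nonneg ?_ (ih (s := b) hp (mul_nonneg hc (hπ _ _ hab).1.le) x y)
      split <;> simp [hc]

lemma pathFlow_support :
    ∀ {s : V} {p : List V} {c : ℝ}, IsPath adj s t p →
      ∀ x y, ¬ adj x y → pathFlow π p c x y = 0 := by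
  intro s p
  induction p generalizing s with
  | nil => intro c h; exact h.elim
  | cons a q ih =>
    match q with
    | [] => intro c _ x y _; simp [pathFlow]
    | b :: r =>
      rintro c ⟨rfl, hab, hp⟩ x y hxy
      have h1 : (if x = a ∧ y = b then c else 0) = 0 := by
        refine if_neg ?_
        rintro ⟨rfl, rfl⟩
        exact hxy hab
      simp only [pathFlow]
      rw [h1, ih (s := b) hp x y hxy, add_zero]

lemma pathFlow_div [Fintype V] :
    ∀ {s : V} {p : List V}, IsPath adj s t p → ∀ (c : ℝ) (u : V),
      (∑ v : V, pathFlow π p c u v) - (∑ v : V, π v u * pathFlow π p c v u)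
        = (if u = s then c else 0) - (if u = t then c * pathRel π p else 0) := by
  intro s p
  induction p generalizing s with
  | nil => exact fun h => h.elim
  | cons a q ih =>
    match q with
    | [] =>
      rintro ⟨rfl, rfl⟩ c u
      simp [pathFlow, pathRel]
    | b :: r =>
      rintro ⟨rfl, hab, hp⟩ c u
      have key := ih (s := b) hp (c * π a b) u
      have h1 : (∑ v : V, pathFlow π (a :: b :: r) c u v)
          = (if u = a then c else 0) + ∑ v : V, pathFlow π (b :: r) (c * π a b) u v := by
        simp only [pathFlow, Finset.sum_add_distrib]
        congr 1
        by_cases h : u = a <;> simp [h]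
      have h2 : (∑ v : V, π v u * pathFlow π (a :: b :: r) c v u)
          = (if u = b then c * π a b else 0)
            + ∑ v : V, π v u * pathFlow π (b :: r) (c * π a b) v u := by
        simp only [pathFlow, mul_add, Finset.sum_add_distrib]
        congr 1
        by_cases h : u = b <;> simp [h, mul_comm]
      have h3 : pathRel π (a :: b :: r) = π a b * pathRel π (b :: r) := rfl
      rw [h1, h2, h3]
      have h4 : c * (π a b * pathRel π (b :: r)) = c * π a b * pathRel π (b :: r) :=
        (mul_assoc _ _ _).symm
      rw [h4]
      by_cases hut : u = t <;> by_cases hua : u = a <;> by_cases hub : u = b <;>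
        simp only [hut, hua, hub, if_pos, if_neg, if_true, if_false] at key ⊢ <;>
        simp_all <;> linarith

end Aux3


/-- The optimal value of the generalized-flow LP `(P)` — maximize `z` subject to
`Σ_{a∈δ⁺(u)} φ_a − Σ_{b∈δ⁻(u)} π_b φ_b ≤ w_u` for all `u ≠ t`,
`Σ_{a∈δ⁺(t)} φ_a − Σ_{b∈δ⁻(t)} π_b φ_b = w_t − z`, and `φ ≥ 0` (supported on arcs) —
equals `f^t = Σ_{s∈V} w_s · Π_{st}` (with `Π_{tt} = 1`): this value is attained and is
the greatest value of the feasible set. -/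
theorem stmt_3 {V : Type*} [Fintype V] (adj : V → V → Prop) (π : V → V → ℝ) (w : V → ℝ)
    (hπ : ∀ a b, adj a b → 0 < π a b ∧ π a b ≤ 1) (hw : ∀ v, 0 ≤ w v) (t : V) :
    IsGreatest
      {z : ℝ | ∃ φ : V → V → ℝ,
        (∀ a b, 0 ≤ φ a b) ∧
        (∀ a b, ¬ adj a b → φ a b = 0) ∧
        (∀ u, u ≠ t → (∑ v : V, φ u v) - (∑ v : V, π v u * φ v u) ≤ w u) ∧
        ((∑ v : V, φ t v) - (∑ v : V, π v t * φ v t) = w t - z)}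
      (∑ s : V, w s * conn adj π s t) := by
  constructor
  · -- membership: construct an optimal flow
    set F : V → V → V → ℝ := fun s =>
      if h : ∃ p, IsPath adj s t p ∧ pathRel π p = conn adj π s t
      then pathFlow π h.choose (w s) else fun _ _ => 0 with hFdef
    have hF0 : ∀ s x y, 0 ≤ F s x y := by
      intro s x y
      simp only [hFdef]
      split_ifs with h
      · exact pathFlow_nonneg hπ h.choose_spec.1 (hw s) x y
      · exact le_refl 0
    have hFsupp : ∀ s x y, ¬ adj x y → F s x y = 0 := by
      intro s x y hxy
      simp only [hFdef]
      split_ifs with h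
      · exact pathFlow_support h.choose_spec.1 x y hxy
      · rfl
    have hFdivt : ∀ s, (∑ v : V, F s t v) - (∑ v : V, π v t * F s v t)
        = (if t = s then w s else 0) - w s * conn adj π s t := by
      intro s
      simp only [hFdef]
      by_cases h : ∃ p, IsPath adj s t p ∧ pathRel π p = conn adj π s t
      · rw [dif_pos h, pathFlow_div h.choose_spec.1 (w s) t, if_pos rfl, h.choose_spec.2]
      · rw [dif_neg h]
        have hconn : conn adj π s t = 0 := by
          rcases conn_attained hπ s with h0 | hex
          · exact h0
          · exact absurd hex h
        have hts : t ≠ s := by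
          rintro rfl
          exact h ⟨[t], ⟨rfl, rfl⟩, by rw [conn_self hπ]; simp [pathRel]⟩
        simp [hconn, hts]
    have hFdiv : ∀ s u, u ≠ t → (∑ v : V, F s u v) - (∑ v : V, π v u * F s v u)
        ≤ (if u = s then w s else 0) := by
      intro s u hu
      simp only [hFdef]
      by_cases h : ∃ p, IsPath adj s t p ∧ pathRel π p = conn adj π s t
      · rw [dif_pos h, pathFlow_div h.choose_spec.1 (w s) u, if_neg hu, sub_zero]
      · rw [dif_neg h]
        simp only [mul_zero, Finset.sum_const_zero, sub_self]
        split_ifs with h2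
        · exact hw s
        · exact le_refl 0
    refine ⟨fun x y => ∑ s : V, F s x y, ?_, ?_, ?_, ?_⟩
    · exact fun a b => Finset.sum_nonneg fun s _ => hF0 s a b
    · exact fun a b hab => Finset.sum_eq_zero fun s _ => hFsupp s a b hab
    · intro u hu
      have e1 : (∑ v : V, ∑ s : V, F s u v) = ∑ s : V, ∑ v : V, F s u v := Finset.sum_comm
      have e2 : (∑ v : V, π v u * ∑ s : V, F s v u) = ∑ s : V, ∑ v : V, π v u * F s v u := by
        simp_rw [Finset.mul_sum]
        exact Finset.sum_comm
      show (∑ v : V, ∑ s : V, F s u v) - (∑ v : V, π v u * ∑ s : V, F s v u) ≤ w u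
      rw [e1, e2, ← Finset.sum_sub_distrib]
      calc ∑ s : V, ((∑ v : V, F s u v) - ∑ v : V, π v u * F s v u)
          ≤ ∑ s : V, (if u = s then w s else 0) :=
            Finset.sum_le_sum fun s _ => hFdiv s u hu
        _ = w u := by simp
    · have e1 : (∑ v : V, ∑ s : V, F s t v) = ∑ s : V, ∑ v : V, F s t v := Finset.sum_comm
      have e2 : (∑ v : V, π v t * ∑ s : V, F s v t) = ∑ s : V, ∑ v : V, π v t * F s v t := by
        simp_rw [Finset.mul_sum]
        exact Finset.sum_comm
      show (∑ v : V, ∑ s : V, F s t v) - (∑ v : V, π v t * ∑ s : V, F s v t)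
          = w t - ∑ s : V, w s * conn adj π s t
      rw [e1, e2, ← Finset.sum_sub_distrib]
      calc ∑ s : V, ((∑ v : V, F s t v) - ∑ v : V, π v t * F s v t)
          = ∑ s : V, ((if t = s then w s else 0) - w s * conn adj π s t) :=
            Finset.sum_congr rfl fun s _ => hFdivt s
        _ = w t - ∑ s : V, w s * conn adj π s t := by
            rw [Finset.sum_sub_distrib]
            simp
  · -- upper bound
    rintro z ⟨φ, hpos, hsupp, hne, ht⟩
    have key : 0 ≤ ∑ u : V, ∑ v : V, φ u v * (conn adj π u t - π u v * conn adj π v t) := by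
      refine Finset.sum_nonneg fun u _ => Finset.sum_nonneg fun v _ => ?_
      by_cases h : adj u v
      · exact mul_nonneg (hpos u v) (sub_nonneg.2 (bellman hπ h))
      · rw [hsupp u v h, zero_mul]
    have expand : ∑ u : V, ∑ v : V, φ u v * (conn adj π u t - π u v * conn adj π v t)
        = ∑ u : V, conn adj π u t * ((∑ v : V, φ u v) - (∑ v : V, π v u * φ v u)) := by
      have e1 : ∀ u, conn adj π u t * ((∑ v : V, φ u v) - (∑ v : V, π v u * φ v u))
          = (∑ v : V, conn adj π u t * φ u v)
            - ∑ v : V, conn adj π u t * (π v u * φ v u) := by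
        intro u; rw [mul_sub, Finset.mul_sum, Finset.mul_sum]
      simp_rw [e1]
      rw [Finset.sum_sub_distrib,
        Finset.sum_comm (f := fun u v => conn adj π u t * (π v u * φ v u)),
        ← Finset.sum_sub_distrib]
      simp_rw [← Finset.sum_sub_distrib]
      refine Finset.sum_congr rfl fun u _ => Finset.sum_congr rfl fun v _ => ?_
      ring
    have main : ∑ u : V, conn adj π u t * ((∑ v : V, φ u v) - (∑ v : V, π v u * φ v u))
        ≤ (∑ s : V, w s * conn adj π s t) - z := by
      calc ∑ u : V, conn adj π u t * ((∑ v : V, φ u v) - (∑ v : V, π v u * φ v u))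
          ≤ ∑ u : V, conn adj π u t * (if u = t then w t - z else w u) := by
            refine Finset.sum_le_sum fun u _ => ?_
            by_cases h : u = t
            · subst h; rw [if_pos rfl, ht]
            · rw [if_neg h]
              exact mul_le_mul_of_nonneg_left (hne u h) (conn_nonneg hπ u)
        _ = (∑ s : V, w s * conn adj π s t) - z := by
            have e : ∀ u : V, conn adj π u t * (if u = t then w t - z else w u)
                = w u * conn adj π u t - (if u = t then conn adj π u t * z else 0) := by
              intro u; by_cases h : u = t <;> simp [h] <;> ring
            simp_rw [e]
            rw [Finset.sum_sub_distrib]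
            congr 1
            simp [conn_self hπ]
    linarith [key, expand, main]
end

section
/- For every constant 0 < α < 1 there exists an instance of the budget-constrained ECA optimization problem on a tree (a spider graph with k+1 branches: k short branches of length 2 with internal node weight 0 and leaf weight 1, and one long branch of length 2k with internal node weights ε and leaf weight 1+ε, central node weight 1, all arcs of improved probability 1 and unimproved probability 0, unit costs, suitable budget and sufficiently small ε, large k) such that the best solution returned by either the incremental greedy or the decremental greedy algorithm achieves ECA value ALG with ALG < α·OPT, where OPT is the optimal ECA. Hence neither greedy algorithm provides a constant-factor approximation guarantee, even on trees. -/
open scoped Classical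

/-- Runs of the incremental greedy algorithm: starting from `S`, repeatedly purchase an
affordable element maximizing the immediate gain of `f` per unit cost, until no
affordable element remains; `IncGreedy f c B S T` holds iff such a run started at `S` can
end at `T`. -/
inductive IncGreedy {E : Type*} [Fintype E] [DecidableEq E]
    (f : Finset E → ℝ) (c : E → ℝ) (B : ℝ) : Finset E → Finset E → Prop
  | done (S : Finset E) :
      (∀ e ∉ S, ¬ (∑ a ∈ insert e S, c a) ≤ B) → IncGreedy f c B S S
  | step (S T : Finset E) (e : E) :
      e ∉ S → (∑ a ∈ insert e S, c a) ≤ B →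
      (∀ e' ∉ S, (∑ a ∈ insert e' S, c a) ≤ B →
        (f (insert e' S) - f S) / c e' ≤ (f (insert e S) - f S) / c e) →
      IncGreedy f c B (insert e S) T → IncGreedy f c B S T

/-- Runs of the decremental greedy algorithm: starting from `S` (all improvements),
repeatedly remove the element of smallest loss of `f` per unit cost until the budget
constraint is met. -/
inductive DecGreedy {E : Type*} [Fintype E] [DecidableEq E]
    (f : Finset E → ℝ) (c : E → ℝ) (B : ℝ) : Finset E → Finset E → Prop
  | done (S : Finset E) : (∑ a ∈ S, c a) ≤ B → DecGreedy f c B S S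
  | step (S T : Finset E) (e : E) :
      ¬ (∑ a ∈ S, c a) ≤ B → e ∈ S →
      (∀ e' ∈ S, (f S - f (S.erase e)) / c e ≤ (f S - f (S.erase e')) / c e') →
      DecGreedy f c B (S.erase e) T → DecGreedy f c B S T

/-- Vertices of the spider with `k + 1` branches: the central node, the two vertices
(internal, leaf) of each of the `k` short branches, and the `2k` vertices of the long
branch (position `2k − 1` being its leaf). -/
abbrev SpV (k : ℕ) := Unit ⊕ ((Fin k × Bool) ⊕ Fin (2 * k))

/-- Edges: for each short branch `i`, `(i, false)` is `center–internal i` and `(i, true)`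
is `internal i–leaf i`; the `j`-th edge of the long branch joins position `j − 1`
(the center for `j = 0`) to position `j`. -/
abbrev SpE (k : ℕ) := (Fin k × Bool) ⊕ Fin (2 * k)

def spEnds (k : ℕ) : SpE k → SpV k × SpV k
  | Sum.inl (i, false) => (Sum.inl (), Sum.inr (Sum.inl (i, false)))
  | Sum.inl (i, true) => (Sum.inr (Sum.inl (i, false)), Sum.inr (Sum.inl (i, true)))
  | Sum.inr j =>
      (if j.1 = 0 then Sum.inl ()
       else Sum.inr (Sum.inr ⟨j.1 - 1, Nat.lt_of_le_of_lt (Nat.sub_le _ _) j.2⟩),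
       Sum.inr (Sum.inr j))

/-- Weights: central node `1`, short-branch internal nodes `0`, short-branch leaves `1`,
long-branch internal nodes `ε`, long-branch leaf `1 + ε`. -/
noncomputable def spW (k : ℕ) (ε : ℝ) : SpV k → ℝ
  | Sum.inl _ => 1
  | Sum.inr (Sum.inl (_, b)) => if b then 1 else 0
  | Sum.inr (Sum.inr j) => if j.1 = 2 * k - 1 then 1 + ε else ε

/-- Probabilities: an edge has probability `1` (in both directions) if improved,
`0` otherwise. -/
noncomputable def spπ (k : ℕ) (S : Finset (SpE k)) (a b : SpV k) : ℝ :=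
  if ∃ e ∈ S, spEnds k e = (a, b) ∨ spEnds k e = (b, a) then 1 else 0

/-- `ECA²` of the spider when the set `S` of edges has been improved. -/
noncomputable def spEca2 (k : ℕ) (ε : ℝ) (S : Finset (SpE k)) : ℝ :=
  ∑ s : SpV k, ∑ t : SpV k,
    spW k ε s * spW k ε t * conn (fun a b => spπ k S a b ≠ 0) (spπ k S) s t

namespace SpAux

variable {k : ℕ}

def adjS (k : ℕ) (S : Finset (SpE k)) (a b : SpV k) : Prop :=
  ∃ e ∈ S, spEnds k e = (a, b) ∨ spEnds k e = (b, a)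

def Reach (k : ℕ) (S : Finset (SpE k)) (s t : SpV k) : Prop :=
  Relation.ReflTransGen (adjS k S) s t

lemma spπ_ne_zero_iff {S : Finset (SpE k)} {a b : SpV k} :
    spπ k S a b ≠ 0 ↔ adjS k S a b := by
  unfold spπ adjS
  split <;> simp_all

lemma adjS_symm {S : Finset (SpE k)} {a b : SpV k} (h : adjS k S a b) : adjS k S b a := by
  obtain ⟨e, he, h⟩ := h; exact ⟨e, he, h.symm⟩

lemma reach_symm {S : Finset (SpE k)} {a b : SpV k} (h : Reach k S a b) : Reach k S b a :=
  by haveI : Std.Symm (adjS k S) := ⟨fun _ _ => adjS_symm⟩; exact Std.Symm.symm (r := Relation.ReflTransGen (adjS k S)) _ _ h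

lemma reach_mono {S S' : Finset (SpE k)} (hss : S ⊆ S') {a b : SpV k}
    (h : Reach k S a b) : Reach k S' a b :=
  Relation.ReflTransGen.mono (fun _ _ ⟨e, he, hh⟩ => ⟨e, hss he, hh⟩) _ _ h

lemma reach_adj {S : Finset (SpE k)} {e : SpE k} (he : e ∈ S) {a b : SpV k}
    (hab : spEnds k e = (a, b) ∨ spEnds k e = (b, a)) : Reach k S a b :=
  Relation.ReflTransGen.single ⟨e, he, hab⟩

lemma pathRel_one {S : Finset (SpE k)} :
    ∀ (p : List (SpV k)) (s t : SpV k),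
      IsPath (fun a b => spπ k S a b ≠ 0) s t p → pathRel (spπ k S) p = 1
  | [], _, _, h => h.elim
  | [_], _, _, _ => rfl
  | a :: b :: p, s, t, h => by
      obtain ⟨-, hab, hp⟩ := h
      have h2 := pathRel_one (b :: p) b t hp
      have h1 : spπ k S a b = 1 := by
        have := spπ_ne_zero_iff.mp hab
        unfold adjS at this
        rw [spπ, if_pos this]
      show spπ k S a b * pathRel (spπ k S) (b :: p) = 1
      rw [h1, h2, one_mul]

lemma isPath_cons_cons {V : Type*} (adj : V → V → Prop) (s t a b : V) (p : List V) :
    IsPath adj s t (a :: b :: p) ↔ a = s ∧ adj a b ∧ IsPath adj b t (b :: p) := Iff.rfl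

lemma isPath_single {V : Type*} (adj : V → V → Prop) (s t a : V) :
    IsPath adj s t [a] ↔ a = s ∧ a = t := Iff.rfl

lemma isPath_iff {V : Type*} (adj : V → V → Prop) (s t : V) :
    (∃ p, IsPath adj s t p) ↔ Relation.ReflTransGen adj s t := by
  constructor
  · rintro ⟨p, hp⟩
    induction p generalizing s with
    | nil => exact hp.elim
    | cons a q ih =>
      cases q with
      | nil =>
        obtain ⟨rfl, rfl⟩ := hp
        exact Relation.ReflTransGen.refl
      | cons b q' =>
        obtain ⟨rfl, hab, hq⟩ := hp
        exact Relation.ReflTransGen.head hab (ih b hq)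
  · intro h
    induction h using Relation.ReflTransGen.head_induction_on with
    | refl => exact ⟨[t], rfl, rfl⟩
    | @head a c h' _ ih =>
      obtain ⟨p, hp⟩ := ih
      cases p with
      | nil => exact hp.elim
      | cons b' q =>
        cases q with
        | nil =>
          obtain ⟨rfl, rfl⟩ := hp
          refine ⟨[a, b'], ?_⟩
          rw [isPath_cons_cons, isPath_single]
          exact ⟨rfl, h', rfl, rfl⟩
        | cons b'' q' =>
          obtain ⟨rfl, hcb, hq⟩ := hp
          refine ⟨a :: b' :: b'' :: q', ?_⟩
          rw [isPath_cons_cons, isPath_cons_cons]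
          exact ⟨rfl, h', rfl, hcb, hq⟩

lemma reach_iff_rtg {S : Finset (SpE k)} {s t : SpV k} :
    Reach k S s t ↔ Relation.ReflTransGen (fun a b => spπ k S a b ≠ 0) s t :=
  ⟨Relation.ReflTransGen.mono (fun _ _ h => spπ_ne_zero_iff.mpr h) _ _,
   Relation.ReflTransGen.mono (fun _ _ h => spπ_ne_zero_iff.mp h) _ _⟩

lemma conn_eq (S : Finset (SpE k)) (s t : SpV k) :
    conn (fun a b => spπ k S a b ≠ 0) (spπ k S) s t = if Reach k S s t then 1 else 0 := by
  unfold conn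
  by_cases h : Reach k S s t
  · rw [if_pos h]
    have hset : ({x | ∃ p, IsPath (fun a b => spπ k S a b ≠ 0) s t p ∧ pathRel (spπ k S) p = x}
        ∪ {0} : Set ℝ) = {1, 0} := by
      ext x
      simp only [Set.mem_union, Set.mem_setOf_eq, Set.mem_singleton_iff, Set.mem_insert_iff]
      constructor
      · rintro (⟨p, hp, rfl⟩ | rfl)
        · exact Or.inl (pathRel_one p s t hp)
        · exact Or.inr rfl
      · rintro (rfl | rfl)
        · obtain ⟨p, hp⟩ := (isPath_iff (fun a b => spπ k S a b ≠ 0) s t).mpr (reach_iff_rtg.mp h)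
          exact Or.inl ⟨p, hp, pathRel_one p s t hp⟩
        · exact Or.inr rfl
    rw [hset, csSup_pair]
    norm_num
  · rw [if_neg h]
    have hset : ({x | ∃ p, IsPath (fun a b => spπ k S a b ≠ 0) s t p ∧ pathRel (spπ k S) p = x}
        ∪ {0} : Set ℝ) = {0} := by
      ext x
      simp only [Set.mem_union, Set.mem_setOf_eq, Set.mem_singleton_iff]
      constructor
      · rintro (⟨p, hp, rfl⟩ | rfl)
        · exact absurd (reach_iff_rtg.mpr ((isPath_iff _ s t).mp ⟨p, hp⟩)) h
        · rfl
      · rintro rfl; exact Or.inr rfl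
    rw [hset, csSup_singleton]

lemma spEca2_eq (ε : ℝ) (S : Finset (SpE k)) :
    spEca2 k ε S = ∑ s : SpV k, ∑ t : SpV k,
      spW k ε s * spW k ε t * (if Reach k S s t then 1 else 0) := by
  unfold spEca2
  refine Finset.sum_congr rfl fun s _ => Finset.sum_congr rfl fun t _ => ?_
  rw [conn_eq]


/-! ### Edge sets and component predicates -/

noncomputable section

def longE (k : ℕ) : Finset (SpE k) := Finset.univ.image Sum.inr

def SHF {k : ℕ} (F : Finset (Fin k)) : Finset (SpE k) :=
  (F ×ˢ (Finset.univ : Finset Bool)).image Sum.inl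

def SF {k : ℕ} (F : Finset (Fin k)) : Finset (SpE k) := longE k ∪ SHF F

@[simp] lemma mem_longE {e : SpE k} : e ∈ longE k ↔ ∃ j, e = Sum.inr j := by
  simp [longE, eq_comm]

@[simp] lemma inl_mem_longE {x : Fin k × Bool} : (Sum.inl x : SpE k) ∈ longE k ↔ False := by
  simp

@[simp] lemma inr_mem_longE {j : Fin (2*k)} : (Sum.inr j : SpE k) ∈ longE k := by simp

@[simp] lemma inl_mem_SHF {x : Fin k × Bool} {F : Finset (Fin k)} :
    (Sum.inl x : SpE k) ∈ SHF F ↔ x.1 ∈ F := by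
  rcases x with ⟨i, b⟩; simp [SHF]

@[simp] lemma inr_mem_SHF {j : Fin (2*k)} {F : Finset (Fin k)} :
    (Sum.inr j : SpE k) ∈ SHF F ↔ False := by simp [SHF]

@[simp] lemma inl_mem_SF {x : Fin k × Bool} {F : Finset (Fin k)} :
    (Sum.inl x : SpE k) ∈ SF F ↔ x.1 ∈ F := by simp [SF]

@[simp] lemma inr_mem_SF {j : Fin (2*k)} {F : Finset (Fin k)} :
    (Sum.inr j : SpE k) ∈ SF F := by simp [SF]

lemma card_longE : (longE k).card = 2 * k := by
  rw [longE, Finset.card_image_of_injective _ Sum.inr_injective]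
  simp

lemma card_SF (F : Finset (Fin k)) : (SF F).card = 2 * k + 2 * F.card := by
  rw [SF, Finset.card_union_of_disjoint, card_longE, SHF,
    Finset.card_image_of_injective _ Sum.inl_injective]
  · rw [Finset.card_product]; simp [mul_comm]
  · rw [Finset.disjoint_left]
    rintro e he hs
    rcases mem_longE.mp he with ⟨j, rfl⟩
    simp at hs

lemma SF_univ : SF (Finset.univ : Finset (Fin k)) = Finset.univ := by
  ext e
  rcases e with x | j <;> simp

def CF {k : ℕ} (F : Finset (Fin k)) : SpV k → Prop
  | Sum.inr (Sum.inl (i, _)) => i ∈ F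
  | _ => True

@[simp] lemma CF_ctr {F : Finset (Fin k)} {u : Unit} : CF F (Sum.inl u) ↔ True := Iff.rfl
@[simp] lemma CF_short {F : Finset (Fin k)} {i : Fin k} {b : Bool} :
    CF F (Sum.inr (Sum.inl (i, b))) ↔ i ∈ F := Iff.rfl
@[simp] lemma CF_long {F : Finset (Fin k)} {j : Fin (2*k)} :
    CF F (Sum.inr (Sum.inr j)) ↔ True := Iff.rfl

def TailP {k : ℕ} (j₀ : Fin (2*k)) : SpV k → Prop
  | Sum.inr (Sum.inr j) => j₀ ≤ j
  | _ => False

@[simp] lemma TailP_ctr {j₀ : Fin (2*k)} {u : Unit} : TailP j₀ (Sum.inl u : SpV k) ↔ False := Iff.rfl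
@[simp] lemma TailP_short {j₀ : Fin (2*k)} {x : Fin k × Bool} :
    TailP j₀ (Sum.inr (Sum.inl x) : SpV k) ↔ False := Iff.rfl
@[simp] lemma TailP_long {j₀ j : Fin (2*k)} :
    TailP j₀ (Sum.inr (Sum.inr j) : SpV k) ↔ j₀ ≤ j := Iff.rfl

/-! ### The component formula -/

lemma spW_nonneg (hε : 0 ≤ ε) (v : SpV k) : 0 ≤ spW k ε v := by
  rcases v with u | ⟨⟨i, b⟩⟩ | j <;> unfold spW <;> split <;> positivity

lemma spEca2_formula (ε : ℝ) (S : Finset (SpE k)) (P Q : SpV k → Prop)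
    [DecidablePred P] [DecidablePred Q]
    (hdisj : ∀ v, ¬ (P v ∧ Q v))
    (hchar : ∀ s t, Reach k S s t ↔ (s = t ∨ (P s ∧ P t) ∨ (Q s ∧ Q t))) :
    spEca2 k ε S
      = (∑ v : SpV k, if P v then spW k ε v else 0) ^ 2
        + (∑ v : SpV k, if Q v then spW k ε v else 0) ^ 2
        + ∑ v : SpV k, (if ¬ P v ∧ ¬ Q v then (spW k ε v) ^ 2 else 0) := by
  rw [spEca2_eq]
  have key : ∀ s t : SpV k,
      spW k ε s * spW k ε t * (if Reach k S s t then 1 else 0)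
        = (if P s then spW k ε s else 0) * (if P t then spW k ε t else 0)
          + (if Q s then spW k ε s else 0) * (if Q t then spW k ε t else 0)
          + (if s = t then (if ¬ P s ∧ ¬ Q s then (spW k ε s) ^ 2 else 0) else 0) := by
    intro s t
    have hds := hdisj s; have hdt := hdisj t
    by_cases hst : s = t
    · subst hst
      rw [if_pos (show Reach k S s s from Relation.ReflTransGen.refl), if_pos rfl]
      by_cases h1 : P s <;> by_cases h2 : Q s
      · exact absurd ⟨h1, h2⟩ hds
      · simp [h1, h2, pow_two]; try ring
      · simp [h1, h2, pow_two]; try ring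
      · simp [h1, h2, pow_two]; try ring
    · rw [if_neg hst]
      by_cases hR : Reach k S s t
      · rw [if_pos hR]
        rcases (hchar s t).mp hR with h | ⟨ha, hb⟩ | ⟨ha, hb⟩
        · exact absurd h hst
        · have h3 : ¬ Q s := fun h => hds ⟨ha, h⟩
          have h4 : ¬ Q t := fun h => hdt ⟨hb, h⟩
          simp [ha, hb, h3, h4]; try ring
        · have h3 : ¬ P s := fun h => hds ⟨h, ha⟩
          have h4 : ¬ P t := fun h => hdt ⟨h, hb⟩
          simp [ha, hb, h3, h4]; try ring
      · rw [if_neg hR]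
        have h1 : ¬ (P s ∧ P t) := fun h => hR ((hchar s t).mpr (Or.inr (Or.inl h)))
        have h2 : ¬ (Q s ∧ Q t) := fun h => hR ((hchar s t).mpr (Or.inr (Or.inr h)))
        by_cases hPs : P s <;> by_cases hPt : P t <;> by_cases hQs : Q s <;>
          by_cases hQt : Q t <;> simp_all
  simp_rw [key, Finset.sum_add_distrib]
  have hP := Finset.sum_mul_sum Finset.univ Finset.univ
      (fun v : SpV k => if P v then spW k ε v else 0) (fun v => if P v then spW k ε v else 0)
  have hQ := Finset.sum_mul_sum Finset.univ Finset.univ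
      (fun v : SpV k => if Q v then spW k ε v else 0) (fun v => if Q v then spW k ε v else 0)
  have hdiag : (∑ s : SpV k, ∑ t : SpV k,
        if s = t then (if ¬ P s ∧ ¬ Q s then (spW k ε s) ^ 2 else 0) else 0)
      = ∑ v : SpV k, (if ¬ P v ∧ ¬ Q v then (spW k ε v) ^ 2 else 0) := by
    refine Finset.sum_congr rfl fun s _ => ?_
    rw [Finset.sum_ite_eq]
    exact if_pos (Finset.mem_univ s)
  rw [sq, sq, hP, hQ, ← hdiag]


/-! ### Reach helpers -/

@[simp] lemma spEnds_false (i : Fin k) :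
    spEnds k (Sum.inl (i, false)) = (Sum.inl (), Sum.inr (Sum.inl (i, false))) := rfl

@[simp] lemma spEnds_true (i : Fin k) :
    spEnds k (Sum.inl (i, true)) = (Sum.inr (Sum.inl (i, false)), Sum.inr (Sum.inl (i, true))) := rfl

lemma spEnds_long (j : Fin (2*k)) :
    spEnds k (Sum.inr j : SpE k)
      = (if j.1 = 0 then Sum.inl ()
          else Sum.inr (Sum.inr ⟨j.1 - 1, Nat.lt_of_le_of_lt (Nat.sub_le _ _) j.2⟩),
         Sum.inr (Sum.inr j)) := rfl

lemma reach_pres (P : SpV k → Prop) {S : Finset (SpE k)}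
    (hP : ∀ e ∈ S, ∀ a b, spEnds k e = (a, b) → (P a ↔ P b)) {s t : SpV k}
    (h : Reach k S s t) : P s ↔ P t := by
  induction h with
  | refl => exact Iff.rfl
  | tail hst hadj ih =>
    rcases hadj with ⟨e, he, h1 | h1⟩
    · exact ih.trans (hP e he _ _ h1)
    · exact ih.trans (hP e he _ _ h1).symm

lemma reach_isolated {S : Finset (SpE k)} {s : SpV k}
    (hs : ∀ e ∈ S, ∀ a b, spEnds k e = (a, b) → a ≠ s ∧ b ≠ s) {t : SpV k}
    (h : Reach k S s t) : t = s := by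
  rcases Relation.ReflTransGen.cases_head h with rfl | ⟨c, hadj, _⟩
  · rfl
  · rcases hadj with ⟨e, he, h1 | h1⟩
    · exact absurd rfl ((hs e he _ _ h1).1)
    · exact absurd rfl ((hs e he _ _ h1).2)

lemma reach_ctr_long {S : Finset (SpE k)} :
    ∀ (n : ℕ) (j : Fin (2*k)), j.1 = n → (∀ j' : Fin (2*k), j'.1 ≤ j.1 → Sum.inr j' ∈ S) →
      Reach k S (Sum.inl ()) (Sum.inr (Sum.inr j)) := by
  intro n
  induction n using Nat.strong_induction_on with
  | _ n ih =>
    intro j hj hmem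
    by_cases h0 : j.1 = 0
    · exact reach_adj (hmem j le_rfl) (Or.inl (by rw [spEnds_long, if_pos h0]))
    · have hprev := ih (j.1 - 1) (by omega) ⟨j.1 - 1, by omega⟩ rfl
        (fun j' hj' => hmem j' (le_trans hj' (Nat.sub_le _ _)))
      exact hprev.tail ⟨Sum.inr j, hmem j le_rfl, Or.inl (by rw [spEnds_long, if_neg h0])⟩

lemma reach_long_long {S : Finset (SpE k)} (j₀ : Fin (2*k)) :
    ∀ (n : ℕ) (j : Fin (2*k)), j.1 = n → j₀ ≤ j →
      (∀ j' : Fin (2*k), j₀ < j' → j' ≤ j → Sum.inr j' ∈ S) →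
      Reach k S (Sum.inr (Sum.inr j₀)) (Sum.inr (Sum.inr j)) := by
  intro n
  induction n using Nat.strong_induction_on with
  | _ n ih =>
    intro j hj hle hmem
    rcases eq_or_lt_of_le hle with heq | hlt
    · cases heq; exact Relation.ReflTransGen.refl
    · have h0 : j.1 ≠ 0 := by
        have := hlt; rw [Fin.lt_def] at this; omega
      have hprev := ih (j.1 - 1) (by omega) ⟨j.1 - 1, by omega⟩ rfl
        (by show j₀.1 ≤ j.1 - 1; rw [Fin.lt_def] at hlt; omega)
        (fun j' h1 h2 => hmem j' h1 (by
          have h3 : j'.1 ≤ j.1 - 1 := h2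
          rw [Fin.le_def]; omega))
      exact hprev.tail ⟨Sum.inr j, hmem j hlt le_rfl, Or.inl (by rw [spEnds_long, if_neg h0])⟩


/-! ### Edge-end facts -/

lemma ends_CF {F : Finset (Fin k)} : ∀ e ∈ SF F, ∀ a b : SpV k,
    spEnds k e = (a, b) → CF F a ∧ CF F b := by
  rintro (⟨i, bb⟩ | j) he a b hab
  · have hi : i ∈ F := by simpa using he
    cases bb
    · rw [spEnds_false] at hab; cases hab; exact ⟨trivial, hi⟩
    · rw [spEnds_true] at hab; cases hab; exact ⟨hi, hi⟩
  · rw [spEnds_long] at hab; cases hab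
    refine ⟨?_, trivial⟩
    split <;> trivial

lemma isolated_not_CF {F : Finset (Fin k)} {S : Finset (SpE k)} (hS : S ⊆ SF F)
    {s : SpV k} (hs : ¬ CF F s) {t : SpV k} (h : Reach k S s t) : t = s := by
  obtain ⟨i, b, rfl, hi⟩ : ∃ i b, s = Sum.inr (Sum.inl (i, b)) ∧ i ∉ F := by
    rcases s with u | ⟨⟨i, b⟩⟩ | j
    · exact absurd trivial hs
    · exact ⟨i, b, rfl, hs⟩
    · exact absurd trivial hs
  refine reach_isolated ?_ h
  rintro (⟨i', bb⟩ | j) he a c hab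
  · have hi' : i' ∈ F := by simpa using hS he
    cases bb
    · rw [spEnds_false] at hab; cases hab
      refine ⟨by simp, ?_⟩
      intro hEq
      rw [Sum.inr.injEq, Sum.inl.injEq, Prod.mk.injEq] at hEq
      exact hi (hEq.1 ▸ hi')
    · rw [spEnds_true] at hab; cases hab
      constructor <;> intro hEq <;>
        rw [Sum.inr.injEq, Sum.inl.injEq, Prod.mk.injEq] at hEq <;>
        exact hi (hEq.1 ▸ hi')
  · rw [spEnds_long] at hab; cases hab
    constructor
    · split <;> simp
    · simp

lemma ends_tail_pres {F : Finset (Fin k)} {j₀ : Fin (2*k)} :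
    ∀ e ∈ (SF F).erase (Sum.inr j₀), ∀ a b : SpV k,
      spEnds k e = (a, b) → (TailP j₀ a ↔ TailP j₀ b) := by
  rintro (⟨i, bb⟩ | j) he a b hab
  · cases bb
    · rw [spEnds_false] at hab; cases hab; simp
    · rw [spEnds_true] at hab; cases hab; simp
  · have hj : j.1 ≠ j₀.1 := by
      intro hEq
      rw [Finset.mem_erase] at he
      exact he.1 (by rw [Fin.ext hEq])
    rw [spEnds_long] at hab; cases hab
    by_cases h0 : j.1 = 0
    · rw [if_pos h0]
      simp only [TailP_ctr, TailP_long, false_iff]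
      show ¬ (j₀.1 ≤ j.1)
      omega
    · rw [if_neg h0]
      show (j₀.1 ≤ j.1 - 1) ↔ (j₀.1 ≤ j.1)
      constructor <;> intro <;> omega

/-! ### Explicit connectivity -/

lemma reach_ctr_SF {F : Finset (Fin k)} {v : SpV k} (hv : CF F v) :
    Reach k (SF F) (Sum.inl ()) v := by
  rcases v with u | ⟨⟨i, b⟩⟩ | j
  · cases u; exact Relation.ReflTransGen.refl
  · have hi : i ∈ F := hv
    cases b
    · exact reach_adj (by simp [hi]) (Or.inl (spEnds_false i))
    · exact (reach_adj (e := Sum.inl (i, false)) (by simp [hi])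
        (Or.inl (spEnds_false i))).tail
        ⟨Sum.inl (i, true), by simp [hi], Or.inl (spEnds_true i)⟩
  · exact reach_ctr_long j.1 j rfl (fun j' _ => by simp)

lemma reach_ctr_cut {F : Finset (Fin k)} {j₀ : Fin (2*k)} {v : SpV k}
    (hv : CF F v) (hnt : ¬ TailP j₀ v) :
    Reach k ((SF F).erase (Sum.inr j₀)) (Sum.inl ()) v := by
  rcases v with u | ⟨⟨i, b⟩⟩ | j
  · cases u; exact Relation.ReflTransGen.refl
  · have hi : i ∈ F := hv
    cases b
    · exact reach_adj (by simp [hi]) (Or.inl (spEnds_false i))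
    · exact (reach_adj (e := Sum.inl (i, false)) (by simp [hi])
        (Or.inl (spEnds_false i))).tail
        ⟨Sum.inl (i, true), by simp [hi], Or.inl (spEnds_true i)⟩
  · have hlt : j.1 < j₀.1 := by
      have : ¬ (j₀.1 ≤ j.1) := hnt
      omega
    refine reach_ctr_long j.1 j rfl (fun j' hj' => ?_)
    rw [Finset.mem_erase]
    refine ⟨?_, by simp⟩
    intro hEq
    rw [Sum.inr.injEq] at hEq
    have := hEq ▸ hj'
    omega

lemma reach_tail_cut {F : Finset (Fin k)} {j₀ j : Fin (2*k)} (hle : j₀ ≤ j) :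
    Reach k ((SF F).erase (Sum.inr j₀)) (Sum.inr (Sum.inr j₀)) (Sum.inr (Sum.inr j)) := by
  refine reach_long_long j₀ j.1 j rfl hle (fun j' h1 _ => ?_)
  rw [Finset.mem_erase]
  refine ⟨?_, by simp⟩
  intro hEq
  rw [Sum.inr.injEq] at hEq
  rw [Fin.lt_def] at h1
  have : j'.1 = j₀.1 := by rw [hEq]
  omega

/-! ### The four characterizations -/

lemma reach_SF_iff (F : Finset (Fin k)) (s t : SpV k) :
    Reach k (SF F) s t ↔ (s = t ∨ ((CF F s ∧ CF F t) ∨ (False ∧ False))) := by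
  constructor
  · intro h
    by_cases hs : CF F s
    · exact Or.inr (Or.inl ⟨hs, (reach_pres (CF F)
        (fun e he a b hab =>
          iff_of_true (ends_CF e he a b hab).1 (ends_CF e he a b hab).2) h).mp hs⟩)
    · exact Or.inl (isolated_not_CF (fun _ he => he) hs h).symm
  · rintro (rfl | ⟨hs, ht⟩ | ⟨h, -⟩)
    · exact Relation.ReflTransGen.refl
    · exact (reach_symm (reach_ctr_SF hs)).trans (reach_ctr_SF ht)
    · exact h.elim

lemma reach_cut_iff (F : Finset (Fin k)) (j₀ : Fin (2*k)) (s t : SpV k) :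
    Reach k ((SF F).erase (Sum.inr j₀)) s t
      ↔ (s = t ∨ (((CF F s ∧ ¬ TailP j₀ s) ∧ (CF F t ∧ ¬ TailP j₀ t))
          ∨ (TailP j₀ s ∧ TailP j₀ t))) := by
  constructor
  · intro h
    have hsub : (SF F).erase (Sum.inr j₀) ⊆ SF F := Finset.erase_subset _ _
    have hCF : CF F s ↔ CF F t := reach_pres (CF F)
      (fun e he a b hab =>
        iff_of_true (ends_CF e (hsub he) a b hab).1 (ends_CF e (hsub he) a b hab).2) h
    have hT : TailP j₀ s ↔ TailP j₀ t := reach_pres (TailP j₀) ends_tail_pres h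
    by_cases hs : CF F s
    · by_cases ht : TailP j₀ s
      · exact Or.inr (Or.inr ⟨ht, hT.mp ht⟩)
      · exact Or.inr (Or.inl ⟨⟨hs, ht⟩, ⟨hCF.mp hs, fun hh => ht (hT.mpr hh)⟩⟩)
    · exact Or.inl (isolated_not_CF hsub hs h).symm
  · rintro (rfl | ⟨⟨hs1, hs2⟩, ht1, ht2⟩ | ⟨hs, ht⟩)
    · exact Relation.ReflTransGen.refl
    · exact (reach_symm (reach_ctr_cut hs1 hs2)).trans (reach_ctr_cut ht1 ht2)
    · obtain ⟨js, rfl, hjs⟩ : ∃ js, s = Sum.inr (Sum.inr js) ∧ j₀ ≤ js := by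
        rcases s with u | x | js
        · exact hs.elim
        · exact hs.elim
        · exact ⟨js, rfl, hs⟩
      obtain ⟨jt, rfl, hjt⟩ : ∃ jt, t = Sum.inr (Sum.inr jt) ∧ j₀ ≤ jt := by
        rcases t with u | x | jt
        · exact ht.elim
        · exact ht.elim
        · exact ⟨jt, rfl, ht⟩
      exact (reach_symm (reach_tail_cut hjs)).trans (reach_tail_cut hjt)


/-! ### State 2: a full branch loses its leaf edge -/

lemma reach_state2_iff {F : Finset (Fin k)} {i₀ : Fin k} (hi₀ : i₀ ∈ F) (s t : SpV k) :
    Reach k ((SF F).erase (Sum.inl (i₀, true))) s t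
      ↔ (s = t ∨ (((CF F s ∧ s ≠ Sum.inr (Sum.inl (i₀, true)))
            ∧ (CF F t ∧ t ≠ Sum.inr (Sum.inl (i₀, true)))) ∨ (False ∧ False))) := by
  have hsub : (SF F).erase (Sum.inl (i₀, true)) ⊆ SF F := Finset.erase_subset _ _
  have hendsP : ∀ e ∈ (SF F).erase (Sum.inl (i₀, true)), ∀ a b : SpV k,
      spEnds k e = (a, b) →
        ((CF F a ∧ a ≠ Sum.inr (Sum.inl (i₀, true)))
          ∧ (CF F b ∧ b ≠ Sum.inr (Sum.inl (i₀, true)))) := by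
    rintro (⟨i, bb⟩ | j) he a b hab
    · rw [Finset.mem_erase] at he
      have hi : i ∈ F := by simpa using he.2
      cases bb
      · rw [spEnds_false] at hab; cases hab
        exact ⟨⟨trivial, by simp⟩, ⟨hi, by simp⟩⟩
      · have hne : i ≠ i₀ := fun hEq => he.1 (by rw [hEq])
        rw [spEnds_true] at hab; cases hab
        refine ⟨⟨hi, by simp⟩, ⟨hi, ?_⟩⟩
        intro hEq
        rw [Sum.inr.injEq, Sum.inl.injEq, Prod.mk.injEq] at hEq
        exact hne hEq.1
    · rw [spEnds_long] at hab; cases hab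
      refine ⟨⟨?_, ?_⟩, trivial, by simp⟩
      · split <;> trivial
      · split <;> simp
  constructor
  · intro h
    by_cases hs : CF F s ∧ s ≠ Sum.inr (Sum.inl (i₀, true))
    · exact Or.inr (Or.inl ⟨hs, (reach_pres _
        (fun e he a b hab =>
          iff_of_true (hendsP e he a b hab).1 (hendsP e he a b hab).2) h).mp hs⟩)
    · rw [not_and_or, not_not] at hs
      rcases hs with hs | rfl
      · exact Or.inl (isolated_not_CF hsub hs h).symm
      · refine Or.inl (reach_isolated (fun e he a b hab => ?_) h).symm
        have h1 := (hendsP e he a b hab).1.2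
        have h2 := (hendsP e he a b hab).2.2
        exact ⟨h1, h2⟩
  · rintro (rfl | ⟨⟨hs1, hs2⟩, ht1, ht2⟩ | ⟨h, -⟩)
    · exact Relation.ReflTransGen.refl
    · have key : ∀ v : SpV k, CF F v → v ≠ Sum.inr (Sum.inl (i₀, true)) →
          Reach k ((SF F).erase (Sum.inl (i₀, true))) (Sum.inl ()) v := by
        rintro (u | ⟨⟨i, b⟩⟩ | j) hv hne
        · cases u; exact Relation.ReflTransGen.refl
        · have hi : i ∈ F := hv
          cases b
          · exact reach_adj (by simp [hi]) (Or.inl (spEnds_false i))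
          · have hne' : i ≠ i₀ := by
              intro hEq; exact hne (by rw [hEq])
            exact (reach_adj (e := Sum.inl (i, false))
              (by simp [hi]) (Or.inl (spEnds_false i))).tail
              ⟨Sum.inl (i, true), by simp [hi, hne'], Or.inl (spEnds_true i)⟩
        · exact reach_ctr_long j.1 j rfl (fun j' _ => by simp)
      exact (reach_symm (key s hs1 hs2)).trans (key t ht1 ht2)
    · exact h.elim

/-! ### State 3: a full branch loses its center edge -/

lemma reach_state3_iff {F : Finset (Fin k)} {i₀ : Fin k} (hi₀ : i₀ ∈ F) (s t : SpV k) :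
    Reach k ((SF F).erase (Sum.inl (i₀, false))) s t
      ↔ (s = t ∨ ((CF (F.erase i₀) s ∧ CF (F.erase i₀) t)
          ∨ ((s = Sum.inr (Sum.inl (i₀, false)) ∨ s = Sum.inr (Sum.inl (i₀, true)))
            ∧ (t = Sum.inr (Sum.inl (i₀, false)) ∨ t = Sum.inr (Sum.inl (i₀, true)))))) := by
  set Q : SpV k → Prop := fun v =>
    v = Sum.inr (Sum.inl (i₀, false)) ∨ v = Sum.inr (Sum.inl (i₀, true)) with hQdef
  have hsub : (SF F).erase (Sum.inl (i₀, false)) ⊆ SF F := Finset.erase_subset _ _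
  have hendsP : ∀ e ∈ (SF F).erase (Sum.inl (i₀, false)), ∀ a b : SpV k,
      spEnds k e = (a, b) → (CF (F.erase i₀) a ↔ CF (F.erase i₀) b) := by
    rintro (⟨i, bb⟩ | j) he a b hab
    · rw [Finset.mem_erase] at he
      have hi : i ∈ F := by simpa using he.2
      cases bb
      · have hne : i ≠ i₀ := fun hEq => he.1 (by rw [hEq])
        rw [spEnds_false] at hab; cases hab
        exact iff_of_true trivial (by simp [Finset.mem_erase, hne, hi])
      · rw [spEnds_true] at hab; cases hab
        exact Iff.rfl
    · rw [spEnds_long] at hab; cases hab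
      refine iff_of_true ?_ trivial
      split <;> trivial
  have hendsQ : ∀ e ∈ (SF F).erase (Sum.inl (i₀, false)), ∀ a b : SpV k,
      spEnds k e = (a, b) → (Q a ↔ Q b) := by
    rintro (⟨i, bb⟩ | j) he a b hab
    · rw [Finset.mem_erase] at he
      cases bb
      · have hne : i ≠ i₀ := fun hEq => he.1 (by rw [hEq])
        rw [spEnds_false] at hab; cases hab
        refine iff_of_false (by simp [hQdef]) ?_
        simp only [hQdef, Sum.inr.injEq, Sum.inl.injEq, Prod.mk.injEq]
        rintro (⟨h1, -⟩ | ⟨h1, -⟩) <;> exact hne h1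
      · rw [spEnds_true] at hab; cases hab
        by_cases hne : i = i₀
        · subst hne
          exact iff_of_true (Or.inl rfl) (Or.inr rfl)
        · refine iff_of_false ?_ ?_ <;>
            simp only [hQdef, Sum.inr.injEq, Sum.inl.injEq, Prod.mk.injEq] <;>
            rintro (⟨h1, -⟩ | ⟨h1, -⟩) <;> exact hne h1
    · rw [spEnds_long] at hab; cases hab
      refine iff_of_false ?_ (by simp [hQdef])
      split <;> simp [hQdef]
  constructor
  · intro h
    by_cases hsQ : Q s
    · exact Or.inr (Or.inr ⟨hsQ, (reach_pres Q hendsQ h).mp hsQ⟩)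
    · by_cases hsP : CF (F.erase i₀) s
      · exact Or.inr (Or.inl ⟨hsP, (reach_pres _ hendsP h).mp hsP⟩)
      · have hs : ¬ CF F s := by
          rcases s with u | ⟨⟨i, b⟩⟩ | j
          · exact absurd trivial hsP
          · intro hi
            have hi' : i ∈ F := hi
            have hne : i ≠ i₀ := by
              intro hEq; subst hEq
              cases b
              · exact hsQ (Or.inl rfl)
              · exact hsQ (Or.inr rfl)
            exact hsP (by simp [Finset.mem_erase, hne, hi'])
          · exact absurd trivial hsP
        exact Or.inl (isolated_not_CF hsub hs h).symm
  · rintro (rfl | ⟨hs, ht⟩ | ⟨hs, ht⟩)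
    · exact Relation.ReflTransGen.refl
    · have key : ∀ v : SpV k, CF (F.erase i₀) v →
          Reach k ((SF F).erase (Sum.inl (i₀, false))) (Sum.inl ()) v := by
        rintro (u | ⟨⟨i, b⟩⟩ | j) hv
        · cases u; exact Relation.ReflTransGen.refl
        · have hi : i ∈ F.erase i₀ := hv
          rw [Finset.mem_erase] at hi
          cases b
          · exact reach_adj (by simp [hi.1, hi.2]) (Or.inl (spEnds_false i))
          · exact (reach_adj (e := Sum.inl (i, false))
              (by simp [hi.1, hi.2]) (Or.inl (spEnds_false i))).tail
              ⟨Sum.inl (i, true), by simp [hi.2], Or.inl (spEnds_true i)⟩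
        · exact reach_ctr_long j.1 j rfl (fun j' _ => by simp)
      exact (reach_symm (key s hs)).trans (key t ht)
    · have key : ∀ v : SpV k,
          (v = Sum.inr (Sum.inl (i₀, false)) ∨ v = Sum.inr (Sum.inl (i₀, true))) →
          Reach k ((SF F).erase (Sum.inl (i₀, false))) (Sum.inr (Sum.inl (i₀, false))) v := by
        rintro v (rfl | rfl)
        · exact Relation.ReflTransGen.refl
        · exact reach_adj (by simp [hi₀]) (Or.inl (spEnds_true i₀))
      exact (reach_symm (key s hs)).trans (key t ht)


/-! ### Vertex sums -/

@[simp] lemma spW_ctr {ε : ℝ} {u : Unit} : spW k ε (Sum.inl u) = 1 := rfl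
@[simp] lemma spW_short {ε : ℝ} {i : Fin k} {b : Bool} :
    spW k ε (Sum.inr (Sum.inl (i, b))) = if b then 1 else 0 := rfl
@[simp] lemma spW_lng {ε : ℝ} {j : Fin (2*k)} :
    spW k ε (Sum.inr (Sum.inr j)) = if j.1 = 2*k-1 then 1+ε else ε := rfl

lemma sum_long_ite (hk : 0 < k) (ε : ℝ) (p : Fin (2*k) → Prop) [DecidablePred p] :
    (∑ j : Fin (2*k), if p j then spW k ε (Sum.inr (Sum.inr j)) else 0)
      = ε * (Finset.univ.filter p).card
        + (if p ⟨2*k-1, by omega⟩ then 1 else 0) := by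
  have hpt : ∀ j : Fin (2*k), (if p j then spW k ε (Sum.inr (Sum.inr j)) else 0)
      = ε * (if p j then 1 else 0)
        + (if j = ⟨2*k-1, by omega⟩ then (if p j then (1:ℝ) else 0) else 0) := by
    intro j
    by_cases hp : p j
    · rw [if_pos hp, if_pos hp, spW_lng]
      by_cases hl : j = (⟨2*k-1, by omega⟩ : Fin (2*k))
      · rw [if_pos (show j.1 = 2*k-1 by rw [hl]), if_pos hl]; ring
      · rw [if_neg (fun h => hl (Fin.ext h)), if_neg hl]; ring
    · rw [if_neg hp, if_neg hp, mul_zero, zero_add]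
      split <;> rfl
  rw [Finset.sum_congr rfl (fun j _ => hpt j), Finset.sum_add_distrib, ← Finset.mul_sum,
    Finset.sum_boole, Finset.sum_ite_eq']
  simp


lemma sum_short_ite (q : Fin k → Bool → Prop) [∀ i b, Decidable (q i b)] :
    (∑ i : Fin k, ∑ b : Bool, if q i b then (if b then (1:ℝ) else 0) else 0)
      = (Finset.univ.filter (fun i => q i true)).card := by
  have hpt : ∀ i : Fin k, (∑ b : Bool, if q i b then (if b then (1:ℝ) else 0) else 0)
      = if q i true then (1:ℝ) else 0 := by
    intro i
    rw [Fintype.sum_bool]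
    by_cases h : q i false <;> simp [h]
  rw [Finset.sum_congr rfl (fun i _ => hpt i), Finset.sum_boole]

lemma card_le_k (F : Finset (Fin k)) : F.card ≤ k := by
  simpa using Finset.card_le_univ F

lemma sum_CF (hk : 0 < k) (ε : ℝ) (F : Finset (Fin k)) :
    (∑ v : SpV k, if CF F v then spW k ε v else 0) = 2 + F.card + 2*k*ε := by
  rw [Fintype.sum_sum_type, Fintype.sum_sum_type, Fintype.sum_prod_type]
  have hu : (∑ u : Unit, if CF F (Sum.inl u) then spW k ε (Sum.inl u) else 0) = 1 := by simp
  have hsh : (∑ i : Fin k, ∑ b : Bool,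
      if CF F (Sum.inr (Sum.inl (i, b))) then spW k ε (Sum.inr (Sum.inl (i, b))) else 0)
      = (F.card : ℝ) := by
    simp only [spW_short, CF_short]
    rw [sum_short_ite (fun i _ => i ∈ F)]
    congr 1
    congr 1
    ext i; simp
  have hlg : (∑ j : Fin (2*k),
      if CF F (Sum.inr (Sum.inr j)) then spW k ε (Sum.inr (Sum.inr j)) else 0)
      = ε * (2*k) + 1 := by
    rw [sum_long_ite hk ε (fun j => CF F (Sum.inr (Sum.inr j)))]
    have h1 : (Finset.univ.filter (fun j : Fin (2*k) => CF F (Sum.inr (Sum.inr j))))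
        = Finset.univ := by
      ext j; simp
    rw [h1]
    simp only [Finset.card_univ, Fintype.card_fin, CF_long, if_true]
    push_cast; ring
  rw [hu, hsh, hlg]; push_cast; ring

lemma sum_notCF (hk : 0 < k) (ε : ℝ) (F : Finset (Fin k)) :
    (∑ v : SpV k, if ¬ CF F v ∧ ¬ False then (spW k ε v)^2 else 0)
      = (k : ℝ) - F.card := by
  rw [Fintype.sum_sum_type, Fintype.sum_sum_type, Fintype.sum_prod_type]
  have hu : (∑ u : Unit, if ¬ CF F (Sum.inl u) ∧ ¬ False then (spW k ε (Sum.inl u))^2 else 0)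
      = 0 := by simp [CF]
  have hlg : (∑ j : Fin (2*k),
      if ¬ CF F (Sum.inr (Sum.inr j)) ∧ ¬ False then (spW k ε (Sum.inr (Sum.inr j)))^2 else 0)
      = 0 := by simp [CF]
  have hsh : (∑ i : Fin k, ∑ b : Bool,
      if ¬ CF F (Sum.inr (Sum.inl (i, b))) ∧ ¬ False
        then (spW k ε (Sum.inr (Sum.inl (i, b))))^2 else 0)
      = (k : ℝ) - F.card := by
    have hpt : ∀ (i : Fin k) (b : Bool),
        (if ¬ CF F (Sum.inr (Sum.inl (i, b))) ∧ ¬ False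
          then (spW k ε (Sum.inr (Sum.inl (i, b))))^2 else 0)
        = if (i ∉ F) then (if b then (1:ℝ) else 0) else 0 := by
      intro i b
      by_cases hi : i ∈ F <;> cases b <;> simp [hi]
    rw [Finset.sum_congr rfl (fun i _ => Finset.sum_congr rfl (fun b _ => hpt i b))]
    rw [sum_short_ite (fun i _ => i ∉ F)]
    have : (Finset.univ.filter (fun i : Fin k => i ∉ F)) = Finset.univ \ F := by
      ext i; simp
    rw [this, Finset.card_sdiff_of_subset (Finset.subset_univ F), Finset.card_univ, Fintype.card_fin,
      Nat.cast_sub (card_le_k F)]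
  rw [hu, hsh, hlg]; ring

lemma sum_head (hk : 0 < k) (ε : ℝ) (F : Finset (Fin k)) (j₀ : Fin (2*k)) :
    (∑ v : SpV k, if CF F v ∧ ¬ TailP j₀ v then spW k ε v else 0)
      = 1 + F.card + j₀.1 * ε := by
  rw [Fintype.sum_sum_type, Fintype.sum_sum_type, Fintype.sum_prod_type]
  have hu : (∑ u : Unit,
      if CF F (Sum.inl u) ∧ ¬ TailP j₀ (Sum.inl u) then spW k ε (Sum.inl u) else 0) = 1 := by
    simp
  have hsh : (∑ i : Fin k, ∑ b : Bool,
      if CF F (Sum.inr (Sum.inl (i, b))) ∧ ¬ TailP j₀ (Sum.inr (Sum.inl (i, b)))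
        then spW k ε (Sum.inr (Sum.inl (i, b))) else 0)
      = (F.card : ℝ) := by
    simp only [spW_short, CF_short, TailP_short, not_false_iff, and_true]
    rw [sum_short_ite (fun i _ => i ∈ F)]
    congr 1
    congr 1
    ext i; simp
  have hlg : (∑ j : Fin (2*k),
      if CF F (Sum.inr (Sum.inr j)) ∧ ¬ TailP j₀ (Sum.inr (Sum.inr j))
        then spW k ε (Sum.inr (Sum.inr j)) else 0)
      = ε * j₀.1 := by
    rw [sum_long_ite hk ε (fun j => CF F (Sum.inr (Sum.inr j)) ∧ ¬ TailP j₀ (Sum.inr (Sum.inr j)))]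
    have h1 : (Finset.univ.filter
        (fun j : Fin (2*k) => CF F (Sum.inr (Sum.inr j)) ∧ ¬ TailP j₀ (Sum.inr (Sum.inr j))))
        = Finset.Iio j₀ := by
      ext j
      simp [not_le]
    have h2 : ¬ (CF F (Sum.inr (Sum.inr (⟨2*k-1, by omega⟩ : Fin (2*k))))
        ∧ ¬ TailP j₀ (Sum.inr (Sum.inr (⟨2*k-1, by omega⟩ : Fin (2*k))))) := by
      rintro ⟨-, h⟩
      exact h (show j₀.1 ≤ 2*k-1 by omega)
    rw [h1, if_neg h2, Fin.card_Iio]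
    ring
  rw [hu, hsh, hlg]; push_cast; ring

lemma sum_tail (hk : 0 < k) (ε : ℝ) (j₀ : Fin (2*k)) :
    (∑ v : SpV k, if TailP j₀ v then spW k ε v else 0)
      = 1 + (2*k - j₀.1 : ℕ) * ε := by
  rw [Fintype.sum_sum_type, Fintype.sum_sum_type, Fintype.sum_prod_type]
  have hu : (∑ u : Unit, if TailP j₀ (Sum.inl u : SpV k) then spW k ε (Sum.inl u) else 0) = 0 := by
    simp
  have hsh : (∑ i : Fin k, ∑ b : Bool,
      if TailP j₀ (Sum.inr (Sum.inl (i, b)) : SpV k)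
        then spW k ε (Sum.inr (Sum.inl (i, b))) else 0) = 0 := by
    simp
  have hlg : (∑ j : Fin (2*k),
      if TailP j₀ (Sum.inr (Sum.inr j) : SpV k) then spW k ε (Sum.inr (Sum.inr j)) else 0)
      = ε * (2*k - j₀.1 : ℕ) + 1 := by
    rw [sum_long_ite hk ε (fun j => TailP j₀ (Sum.inr (Sum.inr j)))]
    have h1 : (Finset.univ.filter (fun j : Fin (2*k) => TailP j₀ (Sum.inr (Sum.inr j))))
        = Finset.Ici j₀ := by
      ext j; simp [TailP_long]
    have h2 : TailP j₀ (Sum.inr (Sum.inr (⟨2*k-1, by omega⟩ : Fin (2*k))) : SpV k) := by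
      show j₀.1 ≤ 2*k-1
      omega
    rw [h1, if_pos h2, Fin.card_Ici]
  rw [hu, hsh, hlg]; push_cast; ring

lemma sum_not_headtail (hk : 0 < k) (ε : ℝ) (F : Finset (Fin k)) (j₀ : Fin (2*k)) :
    (∑ v : SpV k, if ¬ (CF F v ∧ ¬ TailP j₀ v) ∧ ¬ TailP j₀ v then (spW k ε v)^2 else 0)
      = (k : ℝ) - F.card := by
  have hpt : ∀ v : SpV k,
      (if ¬ (CF F v ∧ ¬ TailP j₀ v) ∧ ¬ TailP j₀ v then (spW k ε v)^2 else 0)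
      = if ¬ CF F v ∧ ¬ False then (spW k ε v)^2 else 0 := by
    intro v
    by_cases h1 : CF F v <;> by_cases h2 : TailP j₀ v
    · rcases v with u | x | j
      · exact absurd h2 (by simp)
      · exact absurd h2 (by simp)
      · simp [h1, h2]
    · simp [h1, h2]
    · rcases v with u | x | j
      · exact absurd h2 (by simp)
      · exact absurd h2 (by simp)
      · exact absurd trivial h1
    · simp [h1, h2]
  rw [Finset.sum_congr rfl (fun v _ => hpt v), sum_notCF hk ε F]


lemma sum_P2 (hk : 0 < k) (ε : ℝ) {F : Finset (Fin k)} {i₀ : Fin k} (hi₀ : i₀ ∈ F) :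
    (∑ v : SpV k, if CF F v ∧ v ≠ Sum.inr (Sum.inl (i₀, true)) then spW k ε v else 0)
      = 1 + F.card + 2*k*ε := by
  rw [Fintype.sum_sum_type, Fintype.sum_sum_type, Fintype.sum_prod_type]
  have hc1 : 1 ≤ F.card := Finset.card_pos.mpr ⟨i₀, hi₀⟩
  have hu : (∑ u : Unit, if CF F (Sum.inl u : SpV k) ∧ (Sum.inl u : SpV k) ≠ Sum.inr (Sum.inl (i₀, true))
      then spW k ε (Sum.inl u) else 0) = 1 := by simp
  have hsh : (∑ i : Fin k, ∑ b : Bool,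
      if CF F (Sum.inr (Sum.inl (i, b)) : SpV k)
          ∧ (Sum.inr (Sum.inl (i, b)) : SpV k) ≠ Sum.inr (Sum.inl (i₀, true))
        then spW k ε (Sum.inr (Sum.inl (i, b))) else 0)
      = (F.card : ℝ) - 1 := by
    have hpt : ∀ (i : Fin k) (b : Bool),
        (if CF F (Sum.inr (Sum.inl (i, b)) : SpV k)
            ∧ (Sum.inr (Sum.inl (i, b)) : SpV k) ≠ Sum.inr (Sum.inl (i₀, true))
          then spW k ε (Sum.inr (Sum.inl (i, b))) else 0)
        = if (i ∈ F ∧ ¬ (i = i₀ ∧ b = true)) then (if b then (1:ℝ) else 0) else 0 := by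
      intro i b
      by_cases hi : i ∈ F <;> by_cases he : i = i₀ ∧ b = true
      · obtain ⟨rfl, rfl⟩ := he
        simp [hi]
      · have h1 : (Sum.inr (Sum.inl (i, b)) : SpV k) ≠ Sum.inr (Sum.inl (i₀, true)) := by
          intro hEq
          rw [Sum.inr.injEq, Sum.inl.injEq, Prod.mk.injEq] at hEq
          exact he ⟨hEq.1, hEq.2⟩
        have h2 : CF F (Sum.inr (Sum.inl (i, b)) : SpV k) := hi
        rw [if_pos ⟨h2, h1⟩, if_pos ⟨hi, he⟩, spW_short]
      · obtain ⟨rfl, rfl⟩ := he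
        simp [hi]
      · rw [if_neg (fun h => hi (h.1 : i ∈ F)), if_neg (fun h => hi h.1)]
    rw [Finset.sum_congr rfl (fun i _ => Finset.sum_congr rfl (fun b _ => hpt i b))]
    rw [sum_short_ite (fun i b => i ∈ F ∧ ¬ (i = i₀ ∧ b = true))]
    have : (Finset.univ.filter (fun i : Fin k => i ∈ F ∧ ¬ (i = i₀ ∧ true = true)))
        = F.erase i₀ := by
      ext i; simp [Finset.mem_erase, and_comm]
    rw [this, Finset.card_erase_of_mem hi₀, Nat.cast_sub hc1]
    simp
  have hlg : (∑ j : Fin (2*k),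
      if CF F (Sum.inr (Sum.inr j) : SpV k)
          ∧ (Sum.inr (Sum.inr j) : SpV k) ≠ Sum.inr (Sum.inl (i₀, true))
        then spW k ε (Sum.inr (Sum.inr j)) else 0)
      = ε * (2*k) + 1 := by
    rw [sum_long_ite hk ε (fun j => CF F (Sum.inr (Sum.inr j) : SpV k)
      ∧ (Sum.inr (Sum.inr j) : SpV k) ≠ Sum.inr (Sum.inl (i₀, true)))]
    have h1 : (Finset.univ.filter (fun j : Fin (2*k) => CF F (Sum.inr (Sum.inr j) : SpV k)
        ∧ (Sum.inr (Sum.inr j) : SpV k) ≠ Sum.inr (Sum.inl (i₀, true)))) = Finset.univ := by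
      ext j; simp
    rw [h1, if_pos ⟨trivial, by simp⟩]
    simp only [Finset.card_univ, Fintype.card_fin]
    push_cast; ring
  rw [hu, hsh, hlg]; push_cast; ring

lemma sum_notP2 (hk : 0 < k) (ε : ℝ) {F : Finset (Fin k)} {i₀ : Fin k} (hi₀ : i₀ ∈ F) :
    (∑ v : SpV k, if ¬ (CF F v ∧ v ≠ Sum.inr (Sum.inl (i₀, true))) ∧ ¬ False
      then (spW k ε v)^2 else 0)
      = (k : ℝ) - F.card + 1 := by
  rw [Fintype.sum_sum_type, Fintype.sum_sum_type, Fintype.sum_prod_type]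
  have hu : (∑ u : Unit, if ¬ (CF F (Sum.inl u : SpV k)
      ∧ (Sum.inl u : SpV k) ≠ Sum.inr (Sum.inl (i₀, true))) ∧ ¬ False
      then (spW k ε (Sum.inl u))^2 else 0) = 0 := by simp
  have hlg : (∑ j : Fin (2*k), if ¬ (CF F (Sum.inr (Sum.inr j) : SpV k)
      ∧ (Sum.inr (Sum.inr j) : SpV k) ≠ Sum.inr (Sum.inl (i₀, true))) ∧ ¬ False
      then (spW k ε (Sum.inr (Sum.inr j)))^2 else 0) = 0 := by simp
  have hsh : (∑ i : Fin k, ∑ b : Bool, if ¬ (CF F (Sum.inr (Sum.inl (i, b)) : SpV k)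
      ∧ (Sum.inr (Sum.inl (i, b)) : SpV k) ≠ Sum.inr (Sum.inl (i₀, true))) ∧ ¬ False
      then (spW k ε (Sum.inr (Sum.inl (i, b))))^2 else 0)
      = (k : ℝ) - F.card + 1 := by
    have hpt : ∀ (i : Fin k) (b : Bool),
        (if ¬ (CF F (Sum.inr (Sum.inl (i, b)) : SpV k)
            ∧ (Sum.inr (Sum.inl (i, b)) : SpV k) ≠ Sum.inr (Sum.inl (i₀, true))) ∧ ¬ False
          then (spW k ε (Sum.inr (Sum.inl (i, b))))^2 else 0)
        = if (i ∉ F ∨ (i = i₀ ∧ b = true)) then (if b then (1:ℝ) else 0) else 0 := by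
      intro i b
      by_cases hi : i ∈ F <;> by_cases he : i = i₀ ∧ b = true
      · obtain ⟨rfl, rfl⟩ := he
        simp [hi]
      · have hne : (Sum.inr (Sum.inl (i, b)) : SpV k) ≠ Sum.inr (Sum.inl (i₀, true)) := by
          intro hEq
          rw [Sum.inr.injEq, Sum.inl.injEq, Prod.mk.injEq] at hEq
          exact he ⟨hEq.1, hEq.2⟩
        have h2 : CF F (Sum.inr (Sum.inl (i, b)) : SpV k) := hi
        have hL : ¬ (¬ (CF F (Sum.inr (Sum.inl (i, b)) : SpV k)
            ∧ (Sum.inr (Sum.inl (i, b)) : SpV k) ≠ Sum.inr (Sum.inl (i₀, true))) ∧ ¬ False) :=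
          fun h => h.1 ⟨h2, hne⟩
        have hR : ¬ (i ∉ F ∨ (i = i₀ ∧ b = true)) := by
          rintro (h | h)
          · exact h hi
          · exact he h
        rw [if_neg hL, if_neg hR]
      · obtain ⟨rfl, rfl⟩ := he
        simp [hi]
      · have h2 : ¬ CF F (Sum.inr (Sum.inl (i, b)) : SpV k) := hi
        rw [if_pos ⟨fun h => h2 h.1, not_false⟩, if_pos (Or.inl hi), spW_short]
        cases b <;> simp
    rw [Finset.sum_congr rfl (fun i _ => Finset.sum_congr rfl (fun b _ => hpt i b))]
    rw [sum_short_ite (fun i b => i ∉ F ∨ (i = i₀ ∧ b = true))]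
    have : (Finset.univ.filter (fun i : Fin k => i ∉ F ∨ (i = i₀ ∧ true = true)))
        = insert i₀ (Finset.univ \ F) := by
      ext i
      simp only [Finset.mem_filter, Finset.mem_univ, true_and, Finset.mem_insert,
        Finset.mem_sdiff, and_true]
      tauto
    rw [this, Finset.card_insert_of_notMem (by simp [hi₀]),
      Finset.card_sdiff_of_subset (Finset.subset_univ F), Finset.card_univ, Fintype.card_fin]
    rw [Nat.cast_add, Nat.cast_sub (card_le_k F)]
    push_cast; ring
  rw [hu, hsh, hlg]; ring

lemma sum_Q3 (hk : 0 < k) (ε : ℝ) (i₀ : Fin k) :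
    (∑ v : SpV k, if v = Sum.inr (Sum.inl (i₀, false)) ∨ v = Sum.inr (Sum.inl (i₀, true))
      then spW k ε v else 0) = 1 := by
  rw [Fintype.sum_sum_type, Fintype.sum_sum_type, Fintype.sum_prod_type]
  have hu : (∑ u : Unit, if (Sum.inl u : SpV k) = Sum.inr (Sum.inl (i₀, false))
      ∨ (Sum.inl u : SpV k) = Sum.inr (Sum.inl (i₀, true)) then spW k ε (Sum.inl u) else 0)
      = 0 := by simp
  have hlg : (∑ j : Fin (2*k), if (Sum.inr (Sum.inr j) : SpV k) = Sum.inr (Sum.inl (i₀, false))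
      ∨ (Sum.inr (Sum.inr j) : SpV k) = Sum.inr (Sum.inl (i₀, true))
      then spW k ε (Sum.inr (Sum.inr j)) else 0) = 0 := by simp
  have hsh : (∑ i : Fin k, ∑ b : Bool,
      if (Sum.inr (Sum.inl (i, b)) : SpV k) = Sum.inr (Sum.inl (i₀, false))
        ∨ (Sum.inr (Sum.inl (i, b)) : SpV k) = Sum.inr (Sum.inl (i₀, true))
      then spW k ε (Sum.inr (Sum.inl (i, b))) else 0) = 1 := by
    have hpt : ∀ (i : Fin k) (b : Bool),
        (if (Sum.inr (Sum.inl (i, b)) : SpV k) = Sum.inr (Sum.inl (i₀, false))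
          ∨ (Sum.inr (Sum.inl (i, b)) : SpV k) = Sum.inr (Sum.inl (i₀, true))
        then spW k ε (Sum.inr (Sum.inl (i, b))) else 0)
        = if i = i₀ then (if b then (1:ℝ) else 0) else 0 := by
      intro i b
      by_cases hi : i = i₀
      · subst hi
        cases b <;> simp
      · have h1 : ¬ ((Sum.inr (Sum.inl (i, b)) : SpV k) = Sum.inr (Sum.inl (i₀, false))
            ∨ (Sum.inr (Sum.inl (i, b)) : SpV k) = Sum.inr (Sum.inl (i₀, true))) := by
          rintro (h | h) <;> rw [Sum.inr.injEq, Sum.inl.injEq, Prod.mk.injEq] at h <;>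
            exact hi h.1
        rw [if_neg h1, if_neg hi]
    rw [Finset.sum_congr rfl (fun i _ => Finset.sum_congr rfl (fun b _ => hpt i b))]
    rw [sum_short_ite (fun i _ => i = i₀)]
    have : (Finset.univ.filter (fun i : Fin k => i = i₀)) = {i₀} := by
      ext i; simp
    rw [this]
    simp
  rw [hu, hsh, hlg]; ring

lemma sum_notP3Q3 (hk : 0 < k) (ε : ℝ) {F : Finset (Fin k)} {i₀ : Fin k} (hi₀ : i₀ ∈ F) :
    (∑ v : SpV k, if ¬ CF (F.erase i₀) v
        ∧ ¬ (v = Sum.inr (Sum.inl (i₀, false)) ∨ v = Sum.inr (Sum.inl (i₀, true)))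
      then (spW k ε v)^2 else 0)
      = (k : ℝ) - F.card := by
  rw [Fintype.sum_sum_type, Fintype.sum_sum_type, Fintype.sum_prod_type]
  have hu : (∑ u : Unit, if ¬ CF (F.erase i₀) (Sum.inl u : SpV k)
      ∧ ¬ ((Sum.inl u : SpV k) = Sum.inr (Sum.inl (i₀, false))
        ∨ (Sum.inl u : SpV k) = Sum.inr (Sum.inl (i₀, true)))
      then (spW k ε (Sum.inl u))^2 else 0) = 0 := by simp [CF]
  have hlg : (∑ j : Fin (2*k), if ¬ CF (F.erase i₀) (Sum.inr (Sum.inr j) : SpV k)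
      ∧ ¬ ((Sum.inr (Sum.inr j) : SpV k) = Sum.inr (Sum.inl (i₀, false))
        ∨ (Sum.inr (Sum.inr j) : SpV k) = Sum.inr (Sum.inl (i₀, true)))
      then (spW k ε (Sum.inr (Sum.inr j)))^2 else 0) = 0 := by simp [CF]
  have hsh : (∑ i : Fin k, ∑ b : Bool, if ¬ CF (F.erase i₀) (Sum.inr (Sum.inl (i, b)) : SpV k)
      ∧ ¬ ((Sum.inr (Sum.inl (i, b)) : SpV k) = Sum.inr (Sum.inl (i₀, false))
        ∨ (Sum.inr (Sum.inl (i, b)) : SpV k) = Sum.inr (Sum.inl (i₀, true)))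
      then (spW k ε (Sum.inr (Sum.inl (i, b))))^2 else 0)
      = (k : ℝ) - F.card := by
    have hpt : ∀ (i : Fin k) (b : Bool),
        (if ¬ CF (F.erase i₀) (Sum.inr (Sum.inl (i, b)) : SpV k)
          ∧ ¬ ((Sum.inr (Sum.inl (i, b)) : SpV k) = Sum.inr (Sum.inl (i₀, false))
            ∨ (Sum.inr (Sum.inl (i, b)) : SpV k) = Sum.inr (Sum.inl (i₀, true)))
        then (spW k ε (Sum.inr (Sum.inl (i, b))))^2 else 0)
        = if i ∉ F then (if b then (1:ℝ) else 0) else 0 := by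
      intro i b
      by_cases hi : i ∈ F
      · have hrhs : ¬ (i ∉ F) := fun h => h hi
        by_cases hii : i = i₀
        · subst hii
          have h1 : ¬ (¬ CF (F.erase i) (Sum.inr (Sum.inl (i, b)) : SpV k)
              ∧ ¬ ((Sum.inr (Sum.inl (i, b)) : SpV k) = Sum.inr (Sum.inl (i, false))
                ∨ (Sum.inr (Sum.inl (i, b)) : SpV k) = Sum.inr (Sum.inl (i, true)))) := by
            rintro ⟨-, h2⟩
            cases b
            · exact h2 (Or.inl rfl)
            · exact h2 (Or.inr rfl)
          rw [if_neg h1, if_neg hrhs]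
        · have hcf : CF (F.erase i₀) (Sum.inr (Sum.inl (i, b)) : SpV k) :=
            Finset.mem_erase.mpr ⟨hii, hi⟩
          rw [if_neg (fun h => h.1 hcf), if_neg hrhs]
      · have hii : i ≠ i₀ := fun h => hi (h ▸ hi₀)
        have h1 : ¬ CF (F.erase i₀) (Sum.inr (Sum.inl (i, b)) : SpV k) := by
          intro h
          exact hi (Finset.mem_erase.mp h).2
        have h2 : ¬ ((Sum.inr (Sum.inl (i, b)) : SpV k) = Sum.inr (Sum.inl (i₀, false))
            ∨ (Sum.inr (Sum.inl (i, b)) : SpV k) = Sum.inr (Sum.inl (i₀, true))) := by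
          rintro (h | h) <;> rw [Sum.inr.injEq, Sum.inl.injEq, Prod.mk.injEq] at h <;>
            exact hii h.1
        rw [if_pos ⟨h1, h2⟩, if_pos hi, spW_short]
        cases b <;> simp
    rw [Finset.sum_congr rfl (fun i _ => Finset.sum_congr rfl (fun b _ => hpt i b))]
    rw [sum_short_ite (fun i _ => i ∉ F)]
    have : (Finset.univ.filter (fun i : Fin k => i ∉ F)) = Finset.univ \ F := by
      ext i; simp
    rw [this, Finset.card_sdiff_of_subset (Finset.subset_univ F), Finset.card_univ, Fintype.card_fin,
      Nat.cast_sub (card_le_k F)]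
  rw [hu, hsh, hlg]; ring


/-! ### Exact values -/

lemma eca_SF (hk : 0 < k) (ε : ℝ) (F : Finset (Fin k)) :
    spEca2 k ε (SF F) = (2 + F.card + 2*k*ε)^2 + ((k : ℝ) - F.card) := by
  rw [spEca2_formula ε (SF F) (CF F) (fun _ => False) (fun v h => h.2) (reach_SF_iff F),
    sum_CF hk ε F, sum_notCF hk ε F]
  norm_num

lemma eca_state2 (hk : 0 < k) (ε : ℝ) {F : Finset (Fin k)} {i₀ : Fin k} (hi₀ : i₀ ∈ F) :
    spEca2 k ε ((SF F).erase (Sum.inl (i₀, true)))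
      = (1 + F.card + 2*k*ε)^2 + ((k : ℝ) - F.card + 1) := by
  rw [spEca2_formula ε _ (fun v => CF F v ∧ v ≠ Sum.inr (Sum.inl (i₀, true)))
    (fun _ => False) (fun v h => h.2) (reach_state2_iff hi₀),
    sum_P2 hk ε hi₀, sum_notP2 hk ε hi₀]
  norm_num

lemma eca_state3 (hk : 0 < k) (ε : ℝ) {F : Finset (Fin k)} {i₀ : Fin k} (hi₀ : i₀ ∈ F) :
    spEca2 k ε ((SF F).erase (Sum.inl (i₀, false)))
      = (1 + F.card + 2*k*ε)^2 + ((k : ℝ) - F.card + 1) := by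
  have hc1 : 1 ≤ F.card := Finset.card_pos.mpr ⟨i₀, hi₀⟩
  rw [spEca2_formula ε _ (CF (F.erase i₀))
    (fun v => v = Sum.inr (Sum.inl (i₀, false)) ∨ v = Sum.inr (Sum.inl (i₀, true)))
    (fun v h => by
      rcases h.2 with rfl | rfl
      · exact absurd (h.1 : i₀ ∈ F.erase i₀) (by simp)
      · exact absurd (h.1 : i₀ ∈ F.erase i₀) (by simp))
    (reach_state3_iff hi₀),
    sum_CF hk ε (F.erase i₀), sum_Q3 hk ε i₀, sum_notP3Q3 hk ε hi₀,
    Finset.card_erase_of_mem hi₀, Nat.cast_sub hc1]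
  push_cast
  ring

lemma eca_cut (hk : 0 < k) (ε : ℝ) (F : Finset (Fin k)) (j₀ : Fin (2*k)) :
    spEca2 k ε ((SF F).erase (Sum.inr j₀))
      = (1 + F.card + j₀.1 * ε)^2 + (1 + (2*k - j₀.1 : ℕ) * ε)^2 + ((k : ℝ) - F.card) := by
  rw [spEca2_formula ε _ (fun v => CF F v ∧ ¬ TailP j₀ v) (TailP j₀)
    (fun v h => h.1.2 h.2) (reach_cut_iff F j₀),
    sum_head hk ε F j₀, sum_tail hk ε j₀, sum_not_headtail hk ε F j₀]

lemma cut_lt_erase_short (hk : 0 < k) {ε : ℝ} (hε : 0 < ε) {F : Finset (Fin k)}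
    (hc : 1 ≤ F.card) (j₀ : Fin (2*k)) :
    (1 + F.card + j₀.1 * ε)^2 + (1 + (2*k - j₀.1 : ℕ) * ε)^2 + ((k : ℝ) - F.card)
      < (1 + F.card + 2*k*ε)^2 + ((k : ℝ) - F.card + 1) := by
  set x : ℝ := j₀.1 * ε with hx
  set y : ℝ := ((2*k - j₀.1 : ℕ) : ℝ) * ε with hy
  have hj : j₀.1 < 2*k := j₀.2
  have hxy : x + y = 2*k*ε := by
    rw [hx, hy, Nat.cast_sub (le_of_lt hj)]
    push_cast
    ring
  have hypos : ε ≤ y := by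
    rw [hy]
    have h1 : (1 : ℝ) ≤ ((2*k - j₀.1 : ℕ) : ℝ) := by
      have : 1 ≤ 2*k - j₀.1 := by omega
      exact_mod_cast this
    nlinarith
  have hcR : (1 : ℝ) ≤ F.card := by exact_mod_cast hc
  have hkey : (1 + F.card + 2*k*ε)^2 + ((k : ℝ) - F.card + 1)
      - ((1 + F.card + x)^2 + (1 + y)^2 + ((k : ℝ) - F.card))
      = 2*y*(F.card + x) := by
    rw [← hxy]
    ring
  have hxpos : 0 ≤ x := by
    rw [hx]
    positivity
  nlinarith


/-! ### General inequalities -/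

lemma spEca2_nonneg {ε : ℝ} (hε : 0 ≤ ε) (S : Finset (SpE k)) : 0 ≤ spEca2 k ε S := by
  rw [spEca2_eq]
  refine Finset.sum_nonneg fun s _ => Finset.sum_nonneg fun t _ => ?_
  refine mul_nonneg (mul_nonneg (spW_nonneg hε s) (spW_nonneg hε t)) ?_
  split <;> norm_num

lemma spEca2_mono {ε : ℝ} (hε : 0 ≤ ε) {S S' : Finset (SpE k)} (hss : S ⊆ S') :
    spEca2 k ε S ≤ spEca2 k ε S' := by
  rw [spEca2_eq, spEca2_eq]
  refine Finset.sum_le_sum fun s _ => Finset.sum_le_sum fun t _ => ?_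
  refine mul_le_mul_of_nonneg_left ?_ (mul_nonneg (spW_nonneg hε s) (spW_nonneg hε t))
  by_cases h : Reach k S s t
  · rw [if_pos h, if_pos (reach_mono hss h)]
  · rw [if_neg h]; split <;> norm_num

lemma spEca2_add_le {ε : ℝ} (hε : 0 ≤ ε) {S S' : Finset (SpE k)} (hss : S ⊆ S') {a b : SpV k}
    (hab : a ≠ b) (h1 : Reach k S' a b) (h0 : ¬ Reach k S a b) :
    spEca2 k ε S + 2 * spW k ε a * spW k ε b ≤ spEca2 k ε S' := by
  have key : ∀ s t : SpV k,
      spW k ε s * spW k ε t * (if Reach k S s t then 1 else 0)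
        ≤ spW k ε s * spW k ε t * (if Reach k S' s t then 1 else 0) := by
    intro s t
    refine mul_le_mul_of_nonneg_left ?_ (mul_nonneg (spW_nonneg hε s) (spW_nonneg hε t))
    by_cases h : Reach k S s t
    · rw [if_pos h, if_pos (reach_mono hss h)]
    · rw [if_neg h]; split <;> norm_num
  rw [spEca2_eq, spEca2_eq, ← Finset.sum_product', ← Finset.sum_product']
  set f := fun p : SpV k × SpV k =>
    spW k ε p.1 * spW k ε p.2 * (if Reach k S p.1 p.2 then 1 else 0) with hf
  set g := fun p : SpV k × SpV k =>
    spW k ε p.1 * spW k ε p.2 * (if Reach k S' p.1 p.2 then 1 else 0) with hg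
  have hpairne : ((a, b) : SpV k × SpV k) ≠ (b, a) := by
    intro h; rw [Prod.mk.injEq] at h; exact hab h.1
  have hpair : (∑ p ∈ ({(a, b), (b, a)} : Finset (SpV k × SpV k)), (g p - f p))
      = 2 * spW k ε a * spW k ε b := by
    rw [Finset.sum_pair hpairne]
    have hba1 : Reach k S' b a := reach_symm h1
    have hba0 : ¬ Reach k S b a := fun h => h0 (reach_symm h)
    simp only [hf, hg, if_pos h1, if_pos hba1, if_neg h0, if_neg hba0]
    ring
  have hsub : ({(a, b), (b, a)} : Finset (SpV k × SpV k)) ⊆ Finset.univ ×ˢ Finset.univ := by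
    intro p _; simp [Finset.mem_product]
  have hmono : ∀ p ∈ Finset.univ ×ˢ Finset.univ,
      p ∉ ({(a, b), (b, a)} : Finset (SpV k × SpV k)) → 0 ≤ g p - f p :=
    fun p _ _ => sub_nonneg.mpr (key p.1 p.2)
  have hle := Finset.sum_le_sum_of_subset_of_nonneg hsub hmono
  rw [hpair, Finset.sum_sub_distrib] at hle
  linarith

/-! ### Cut lemmas for arbitrary edge sets -/

lemma tailP_edge {j₀ : Fin (2*k)} (e : SpE k) (hne : e ≠ Sum.inr j₀) (a b : SpV k)
    (hab : spEnds k e = (a, b)) : TailP j₀ a ↔ TailP j₀ b := by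
  rcases e with ⟨i, bb⟩ | j
  · cases bb
    · rw [spEnds_false] at hab; cases hab; simp
    · rw [spEnds_true] at hab; cases hab; simp
  · have hj : j.1 ≠ j₀.1 := by
      intro hEq; exact hne (by rw [Fin.ext hEq])
    rw [spEnds_long] at hab; cases hab
    by_cases h0 : j.1 = 0
    · rw [if_pos h0]
      simp only [TailP_ctr, TailP_long, false_iff]
      show ¬ (j₀.1 ≤ j.1)
      omega
    · rw [if_neg h0]
      show (j₀.1 ≤ j.1 - 1) ↔ (j₀.1 ≤ j.1)
      constructor <;> intro <;> omega

lemma tail_cut {S : Finset (SpE k)} {j₀ : Fin (2*k)} (hnot : Sum.inr j₀ ∉ S) {s t : SpV k}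
    (h : Reach k S s t) : TailP j₀ s ↔ TailP j₀ t :=
  reach_pres _ (fun e he a b hab =>
    tailP_edge e (fun hEq => hnot (hEq ▸ he)) a b hab) h

lemma leaf_isolated {S : Finset (SpE k)} {i₀ : Fin k} (hnot : Sum.inl (i₀, true) ∉ S)
    {t : SpV k} (h : Reach k S (Sum.inr (Sum.inl (i₀, true))) t) :
    t = Sum.inr (Sum.inl (i₀, true)) := by
  refine reach_isolated ?_ h
  rintro (⟨i, bb⟩ | j) he a b hab
  · cases bb
    · rw [spEnds_false] at hab; cases hab
      constructor
      · simp
      · intro hEq; rw [Sum.inr.injEq, Sum.inl.injEq, Prod.mk.injEq] at hEq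
        exact Bool.false_ne_true hEq.2
    · have hne : i ≠ i₀ := by
        rintro rfl; exact hnot he
      rw [spEnds_true] at hab; cases hab
      constructor
      · intro hEq; rw [Sum.inr.injEq, Sum.inl.injEq, Prod.mk.injEq] at hEq
        exact Bool.false_ne_true hEq.2
      · intro hEq; rw [Sum.inr.injEq, Sum.inl.injEq, Prod.mk.injEq] at hEq
        exact hne hEq.1
  · rw [spEnds_long] at hab; cases hab
    constructor
    · split <;> simp
    · simp

lemma branch_cut {S : Finset (SpE k)} {i₀ : Fin k} (hnot : Sum.inl (i₀, false) ∉ S)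
    {s t : SpV k} (h : Reach k S s t) :
    ((s = Sum.inr (Sum.inl (i₀, false)) ∨ s = Sum.inr (Sum.inl (i₀, true)))
      ↔ (t = Sum.inr (Sum.inl (i₀, false)) ∨ t = Sum.inr (Sum.inl (i₀, true)))) := by
  refine reach_pres
    (fun v => v = Sum.inr (Sum.inl (i₀, false)) ∨ v = Sum.inr (Sum.inl (i₀, true))) ?_ h
  rintro (⟨i, bb⟩ | j) he a b hab
  · cases bb
    · have hne : i ≠ i₀ := by
        rintro rfl; exact hnot he
      rw [spEnds_false] at hab; cases hab
      refine iff_of_false (by simp) ?_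
      rintro (hEq | hEq) <;> rw [Sum.inr.injEq, Sum.inl.injEq, Prod.mk.injEq] at hEq
      · exact hne hEq.1
      · exact Bool.false_ne_true hEq.2
    · rw [spEnds_true] at hab; cases hab
      by_cases hne : i = i₀
      · subst hne
        exact iff_of_true (Or.inl rfl) (Or.inr rfl)
      · refine iff_of_false ?_ ?_ <;>
          (rintro (hEq | hEq) <;> rw [Sum.inr.injEq, Sum.inl.injEq, Prod.mk.injEq] at hEq)
        · exact hne hEq.1
        · simp at hEq
        · exact hne hEq.1
        · exact hne hEq.1
  · rw [spEnds_long] at hab; cases hab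
    refine iff_of_false ?_ (by simp)
    split <;> simp

lemma short_isolated {S : Finset (SpE k)} (hS : S ⊆ longE k) {x : Fin k × Bool} {t : SpV k}
    (h : Reach k S (Sum.inr (Sum.inl x)) t) : t = Sum.inr (Sum.inl x) := by
  refine reach_isolated ?_ h
  intro e he a b hab
  rcases mem_longE.mp (hS he) with ⟨j, rfl⟩
  rw [spEnds_long] at hab; cases hab
  constructor
  · split <;> simp
  · simp

/-! ### One-edge insertion -/

lemma reach_insert {S : Finset (SpE k)} {e : SpE k} {a b : SpV k}
    (hab : spEnds k e = (a, b)) (s t : SpV k) :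
    Reach k (insert e S) s t
      ↔ Reach k S s t ∨ (Reach k S s a ∧ Reach k S b t) ∨ (Reach k S s b ∧ Reach k S a t) := by
  constructor
  · intro h
    induction h using Relation.ReflTransGen.head_induction_on with
    | refl => exact Or.inl Relation.ReflTransGen.refl
    | @head s' c hadj hrest ih =>
      obtain ⟨e', he', hor⟩ := hadj
      rcases Finset.mem_insert.mp he' with rfl | heS
      · rcases hor with h1 | h1 <;> rw [hab] at h1 <;>
          obtain ⟨rfl, rfl⟩ := Prod.mk.inj h1
        · rcases ih with h2 | ⟨h2, h3⟩ | ⟨h2, h3⟩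
          · exact Or.inr (Or.inl ⟨Relation.ReflTransGen.refl, h2⟩)
          · exact Or.inr (Or.inl ⟨Relation.ReflTransGen.refl, h3⟩)
          · exact Or.inl h3
        · rcases ih with h2 | ⟨h2, h3⟩ | ⟨h2, h3⟩
          · exact Or.inr (Or.inr ⟨Relation.ReflTransGen.refl, h2⟩)
          · exact Or.inl h3
          · exact Or.inr (Or.inr ⟨Relation.ReflTransGen.refl, h3⟩)
      · have hadj' : adjS k S s' c := ⟨e', heS, hor⟩
        rcases ih with h2 | ⟨h2, h3⟩ | ⟨h2, h3⟩
        · exact Or.inl (h2.head hadj')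
        · exact Or.inr (Or.inl ⟨h2.head hadj', h3⟩)
        · exact Or.inr (Or.inr ⟨h2.head hadj', h3⟩)
  · rintro (h | ⟨h1, h2⟩ | ⟨h1, h2⟩)
    · exact reach_mono (Finset.subset_insert e S) h
    · exact ((reach_mono (Finset.subset_insert e S) h1).trans
        (reach_adj (Finset.mem_insert_self e S) (Or.inl hab))).trans
        (reach_mono (Finset.subset_insert e S) h2)
    · exact ((reach_mono (Finset.subset_insert e S) h1).trans
        (reach_adj (Finset.mem_insert_self e S) (Or.inr hab))).trans
        (reach_mono (Finset.subset_insert e S) h2)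


/-! ### Gains for the incremental greedy -/

lemma spEca2_insert_short {ε : ℝ} {S : Finset (SpE k)} (hS : S ⊆ longE k)
    (i : Fin k) (b : Bool) :
    spEca2 k ε (insert (Sum.inl (i, b)) S) = spEca2 k ε S := by
  rw [spEca2_eq, spEca2_eq]
  refine Finset.sum_congr rfl fun s _ => Finset.sum_congr rfl fun t _ => ?_
  by_cases h : Reach k S s t
  · rw [if_pos h, if_pos (reach_mono (Finset.subset_insert _ _) h)]
  · by_cases h' : Reach k (insert (Sum.inl (i, b)) S) s t
    · rw [if_pos h', if_neg h]
      cases b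
      · rcases (reach_insert (spEnds_false i) s t).mp h' with h2 | ⟨h2, h3⟩ | ⟨h2, h3⟩
        · exact absurd h2 h
        · rw [short_isolated hS h3]
          simp
        · rw [short_isolated hS (reach_symm h2)]
          simp
      · rcases (reach_insert (spEnds_true i) s t).mp h' with h2 | ⟨h2, h3⟩ | ⟨h2, h3⟩
        · exact absurd h2 h
        · rw [short_isolated hS (reach_symm h2)]
          simp
        · rw [short_isolated hS h3]
          simp
    · rw [if_neg h, if_neg h']

lemma spEca2_insert_long {ε : ℝ} (hε : 0 < ε) {S : Finset (SpE k)} (hS : S ⊆ longE k)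
    {j : Fin (2*k)} (hj : Sum.inr j ∉ S) :
    spEca2 k ε S < spEca2 k ε (insert (Sum.inr j) S) := by
  set a : SpV k := (spEnds k (Sum.inr j)).1 with ha
  set b : SpV k := Sum.inr (Sum.inr j) with hb
  have hends : spEnds k (Sum.inr j : SpE k) = (a, b) := rfl
  have hne : a ≠ b := by
    rw [ha, hb, spEnds_long]
    by_cases h0 : j.1 = 0
    · rw [if_pos h0]; simp
    · rw [if_neg h0]
      intro hEq
      rw [Sum.inr.injEq, Sum.inr.injEq] at hEq
      have : j.1 - 1 = j.1 := by rw [Fin.ext_iff] at hEq; exact hEq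
      omega
  have hwa : 0 < spW k ε a := by
    rw [ha, spEnds_long]
    by_cases h0 : j.1 = 0
    · rw [if_pos h0]; norm_num
    · rw [if_neg h0, spW_lng]
      split <;> nlinarith
  have hwb : 0 < spW k ε b := by
    rw [hb, spW_lng]
    split <;> nlinarith
  have h1 : Reach k (insert (Sum.inr j) S) a b :=
    reach_adj (Finset.mem_insert_self _ _) (Or.inl hends)
  have h0 : ¬ Reach k S a b := by
    intro h
    have := (tail_cut hj h).mpr (show TailP j b from le_refl j)
    rw [ha, spEnds_long] at this
    by_cases hj0 : j.1 = 0
    · rw [if_pos hj0] at this; exact this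
    · rw [if_neg hj0] at this
      have h2 : j.1 ≤ j.1 - 1 := this
      omega
  have := spEca2_add_le (le_of_lt hε) (Finset.subset_insert _ _) hne h1 h0
  nlinarith

/-! ### Upper bound for subsets of the long branch -/

lemma spEca2_long_le (hk : 0 < k) {ε : ℝ} (hε : 0 ≤ ε) {S : Finset (SpE k)}
    (hS : S ⊆ longE k) :
    spEca2 k ε S ≤ (2 + 2*k*ε)^2 + k := by
  rw [spEca2_eq]
  have key : ∀ s t : SpV k,
      spW k ε s * spW k ε t * (if Reach k S s t then 1 else 0)
        ≤ (if CF (∅ : Finset (Fin k)) s then spW k ε s else 0)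
            * (if CF (∅ : Finset (Fin k)) t then spW k ε t else 0)
          + (if s = t then (if ¬ CF (∅ : Finset (Fin k)) s ∧ ¬ False
              then (spW k ε s)^2 else 0) else 0) := by
    intro s t
    have hnn : (0:ℝ) ≤ (if CF (∅ : Finset (Fin k)) s then spW k ε s else 0)
        * (if CF (∅ : Finset (Fin k)) t then spW k ε t else 0)
        + (if s = t then (if ¬ CF (∅ : Finset (Fin k)) s ∧ ¬ False
            then (spW k ε s)^2 else 0) else 0) := by
      refine add_nonneg (mul_nonneg ?_ ?_) ?_ <;>
        first
          | (split
             · exact spW_nonneg hε _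
             · exact le_refl 0)
          | (split
             · split
               · positivity
               · exact le_refl 0
             · exact le_refl 0)
    by_cases hst : Reach k S s t
    · by_cases heq : s = t
      · subst heq
        rw [if_pos hst, if_pos rfl]
        by_cases hcf : CF (∅ : Finset (Fin k)) s
        · rw [if_pos hcf, if_neg (fun hh : ¬ CF (∅ : Finset (Fin k)) s ∧ ¬ False => hh.1 hcf),
            mul_one, add_zero]
        · rw [if_neg hcf, if_pos ⟨hcf, not_false⟩, mul_one, zero_mul, zero_add, pow_two]
      · have hboth : CF (∅ : Finset (Fin k)) s ∧ CF (∅ : Finset (Fin k)) t := by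
          constructor
          · rcases s with u | x | jj
            · trivial
            · exact absurd (short_isolated hS hst).symm heq
            · trivial
          · rcases t with u | x | jj
            · trivial
            · exact absurd (short_isolated hS (reach_symm hst)) heq
            · trivial
        rw [if_pos hst, if_neg heq, if_pos hboth.1, if_pos hboth.2, mul_one, add_zero]
    · rw [if_neg hst, mul_zero]
      exact hnn
  have hle := Finset.sum_le_sum fun s (_ : s ∈ Finset.univ) =>
    Finset.sum_le_sum fun t (_ : t ∈ Finset.univ) => key s t
  refine le_trans hle ?_
  simp_rw [Finset.sum_add_distrib]
  have hP := Finset.sum_mul_sum Finset.univ Finset.univ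
    (fun v : SpV k => if CF (∅ : Finset (Fin k)) v then spW k ε v else 0)
    (fun v => if CF (∅ : Finset (Fin k)) v then spW k ε v else 0)
  have hdiag : (∑ s : SpV k, ∑ t : SpV k,
        if s = t then (if ¬ CF (∅ : Finset (Fin k)) s ∧ ¬ False then (spW k ε s) ^ 2 else 0) else 0)
      = ∑ v : SpV k, (if ¬ CF (∅ : Finset (Fin k)) v ∧ ¬ False then (spW k ε v) ^ 2 else 0) := by
    refine Finset.sum_congr rfl fun s _ => ?_
    rw [Finset.sum_ite_eq]
    exact if_pos (Finset.mem_univ s)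
  rw [← hP, hdiag, sum_CF hk ε ∅, sum_notCF hk ε ∅, ← sq]
  simp

/-! ### Lower bound for the all-shorts solution -/

def CLP {k : ℕ} : SpV k → Prop
  | Sum.inl _ => True
  | Sum.inr (Sum.inl (_, b)) => b = true
  | Sum.inr (Sum.inr _) => False

lemma opt_reach (i : Fin k) :
    Reach k (SHF (Finset.univ : Finset (Fin k))) (Sum.inl ()) (Sum.inr (Sum.inl (i, true))) :=
  (reach_adj (e := Sum.inl (i, false)) (by simp) (Or.inl (spEnds_false i))).tail
    ⟨Sum.inl (i, true), by simp, Or.inl (spEnds_true i)⟩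

lemma sum_CLP (hk : 0 < k) (ε : ℝ) :
    (∑ v : SpV k, if CLP v then spW k ε v else 0) = (k : ℝ) + 1 := by
  rw [Fintype.sum_sum_type, Fintype.sum_sum_type, Fintype.sum_prod_type]
  have hu : (∑ u : Unit, if CLP (Sum.inl u : SpV k) then spW k ε (Sum.inl u) else 0) = 1 := by
    simp [CLP]
  have hlg : (∑ j : Fin (2*k),
      if CLP (Sum.inr (Sum.inr j) : SpV k) then spW k ε (Sum.inr (Sum.inr j)) else 0) = 0 := by
    simp [CLP]
  have hsh : (∑ i : Fin k, ∑ b : Bool,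
      if CLP (Sum.inr (Sum.inl (i, b)) : SpV k) then spW k ε (Sum.inr (Sum.inl (i, b))) else 0)
      = (k : ℝ) := by
    have hpt : ∀ i : Fin k, (∑ b : Bool,
        if CLP (Sum.inr (Sum.inl (i, b)) : SpV k) then spW k ε (Sum.inr (Sum.inl (i, b))) else 0)
        = 1 := by
      intro i
      rw [Fintype.sum_bool]
      simp [CLP]
    rw [Finset.sum_congr rfl (fun i _ => hpt i)]
    simp
  rw [hu, hsh, hlg]; ring

lemma eca_opt_ge (hk : 0 < k) {ε : ℝ} (hε : 0 ≤ ε) :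
    ((k : ℝ) + 1)^2 ≤ spEca2 k ε (SHF (Finset.univ : Finset (Fin k))) := by
  rw [spEca2_eq]
  have key : ∀ s t : SpV k,
      (if CLP s then spW k ε s else 0) * (if CLP t then spW k ε t else 0)
        ≤ spW k ε s * spW k ε t * (if Reach k (SHF Finset.univ) s t then 1 else 0) := by
    intro s t
    have hnn : (0:ℝ) ≤ spW k ε s * spW k ε t
        * (if Reach k (SHF (Finset.univ : Finset (Fin k))) s t then 1 else 0) := by
      refine mul_nonneg (mul_nonneg (spW_nonneg hε s) (spW_nonneg hε t)) ?_
      split <;> norm_num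
    by_cases hs : CLP s
    · by_cases ht : CLP t
      · rw [if_pos hs, if_pos ht]
        have h1 : ∀ v : SpV k, CLP v →
            Reach k (SHF (Finset.univ : Finset (Fin k))) (Sum.inl ()) v := by
          rintro (u | ⟨⟨i, b⟩⟩ | j) hv
          · cases u; exact Relation.ReflTransGen.refl
          · cases b
            · exact absurd hv (by simp [CLP])
            · exact opt_reach i
          · exact hv.elim
        have hr : Reach k (SHF (Finset.univ : Finset (Fin k))) s t :=
          (reach_symm (h1 s hs)).trans (h1 t ht)
        rw [if_pos hr, mul_one]
      · rw [if_neg ht, mul_zero]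
        exact hnn
    · rw [if_neg hs, zero_mul]
      exact hnn
  have hle := Finset.sum_le_sum fun s (_ : s ∈ Finset.univ) =>
    Finset.sum_le_sum fun t (_ : t ∈ Finset.univ) => key s t
  rw [← Finset.sum_mul_sum, sum_CLP hk ε] at hle
  calc ((k : ℝ) + 1)^2 = ((k:ℝ)+1) * ((k:ℝ)+1) := sq ((k:ℝ)+1)
    _ ≤ _ := hle


/-! ### Greedy run analysis -/

lemma sum_ones {β : Type*} (S : Finset β) : (∑ _a ∈ S, (1:ℝ)) = S.card := by simp

lemma card_SHF_univ : (SHF (Finset.univ : Finset (Fin k))).card = 2 * k := by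
  rw [SHF, Finset.card_image_of_injective _ Sum.inl_injective, Finset.card_product]
  simp [mul_comm]

lemma SF_empty_subset : SF (∅ : Finset (Fin k)) ⊆ longE k := by
  intro x hx
  rcases x with ⟨i, b⟩ | j
  · exact absurd (inl_mem_SF.mp hx) (by simp)
  · simp

lemma long_edge_not_reach {ε : ℝ} {S : Finset (SpE k)} {j : Fin (2*k)}
    (hj : Sum.inr j ∉ S) :
    ¬ Reach k S (spEnds k (Sum.inr j : SpE k)).1 (Sum.inr (Sum.inr j)) := by
  intro h
  have := (tail_cut hj h).mpr (show TailP j (Sum.inr (Sum.inr j) : SpV k) from le_refl j)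
  rw [spEnds_long] at this
  by_cases hj0 : j.1 = 0
  · rw [if_pos hj0] at this; exact this
  · rw [if_neg hj0] at this
    have h2 : j.1 ≤ j.1 - 1 := this
    omega

lemma long_edge_fst_ne {j : Fin (2*k)} :
    (spEnds k (Sum.inr j : SpE k)).1 ≠ Sum.inr (Sum.inr j) := by
  rw [spEnds_long]
  by_cases h0 : j.1 = 0
  · rw [if_pos h0]; simp
  · rw [if_neg h0]
    intro hEq
    rw [Sum.inr.injEq, Sum.inr.injEq] at hEq
    have : j.1 - 1 = j.1 := by rw [Fin.ext_iff] at hEq; exact hEq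
    omega

lemma long_edge_fst_pos {ε : ℝ} (hε : 0 < ε) (j : Fin (2*k)) :
    0 < spW k ε (spEnds k (Sum.inr j : SpE k)).1 := by
  rw [spEnds_long]
  by_cases h0 : j.1 = 0
  · rw [if_pos h0]; norm_num
  · rw [if_neg h0, spW_lng]
    split <;> nlinarith

lemma inc_invariant (hk : 0 < k) {ε : ℝ} (hε : 0 < ε) {S T : Finset (SpE k)}
    (h : IncGreedy (fun U => Real.sqrt (spEca2 k ε U)) (fun _ => (1:ℝ)) ((2*k : ℕ) : ℝ) S T) :
    S ⊆ longE k → T ⊆ longE k := by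
  induction h with
  | done S hdone => exact id
  | step S T e hne hcost hmax hrec ih =>
    intro hS
    refine ih ?_
    intro x hx
    rcases Finset.mem_insert.mp hx with rfl | hxS
    swap
    · exact hS hxS
    rcases x with ⟨i, b⟩ | j
    swap
    · simp
    exfalso
    have hcost' : (S.card : ℝ) + 1 ≤ ((2*k : ℕ) : ℝ) := by
      rw [sum_ones, Finset.card_insert_of_notMem hne] at hcost
      push_cast at hcost ⊢
      linarith
    have hcardlt : S.card < 2*k := by
      have h2 : (S.card : ℝ) < ((2*k : ℕ) : ℝ) := by linarith
      exact_mod_cast h2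
    obtain ⟨e', he'long, he'S⟩ : ∃ e', e' ∈ longE k ∧ e' ∉ S := by
      by_contra hcon
      push_neg at hcon
      have hsub : longE k ⊆ S := fun x hx => hcon x hx
      have := Finset.card_le_card hsub
      rw [card_longE] at this
      omega
    rcases mem_longE.mp he'long with ⟨j, rfl⟩
    have haff : (∑ _a ∈ insert (Sum.inr j) S, (1:ℝ)) ≤ ((2*k : ℕ) : ℝ) := by
      rw [sum_ones, Finset.card_insert_of_notMem he'S]
      push_cast
      push_cast at hcost'
      linarith
    have hmax' := hmax (Sum.inr j) he'S haff
    simp only [div_one] at hmax'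
    have hzero : Real.sqrt (spEca2 k ε (insert (Sum.inl (i, b)) S))
        = Real.sqrt (spEca2 k ε S) := by
      rw [spEca2_insert_short hS i b]
    have hpos : Real.sqrt (spEca2 k ε S) < Real.sqrt (spEca2 k ε (insert (Sum.inr j) S)) :=
      Real.sqrt_lt_sqrt (spEca2_nonneg (le_of_lt hε) S) (spEca2_insert_long hε hS he'S)
    rw [hzero] at hmax'
    linarith

set_option maxHeartbeats 2000000 in
lemma dec_invariant (hk : 0 < k) {ε : ℝ} (hε : 0 < ε) {S T : Finset (SpE k)}
    (h : DecGreedy (fun U => Real.sqrt (spEca2 k ε U)) (fun _ => (1:ℝ)) ((2*k : ℕ) : ℝ) S T) :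
    ((∃ F, S = SF F) ∨ (∃ (F : Finset (Fin k)) (i₀ : Fin k) (b₀ : Bool),
        i₀ ∈ F ∧ S = (SF F).erase (Sum.inl (i₀, b₀))))
      → T = SF (∅ : Finset (Fin k)) := by
  induction h with
  | done S hle =>
    rintro (⟨F, rfl⟩ | ⟨F, i₀, b₀, hi₀, rfl⟩)
    · rw [sum_ones] at hle
      have h1 : (SF F).card ≤ 2*k := by exact_mod_cast hle
      rw [card_SF] at h1
      have h2 : F.card = 0 := by omega
      rw [Finset.card_eq_zero.mp h2]
    · exfalso
      rw [sum_ones, Finset.card_erase_of_mem (by simp [hi₀]), card_SF] at hle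
      have h1 : 2*k + 2*F.card - 1 ≤ 2*k := by exact_mod_cast hle
      have hc1 : 1 ≤ F.card := Finset.card_pos.mpr ⟨i₀, hi₀⟩
      omega
  | step S T e hover he hmin hrec ih =>
    intro hgood
    refine ih ?_
    have key : ∀ e' ∈ S, spEca2 k ε (S.erase e') ≤ spEca2 k ε (S.erase e) := by
      intro e' he'
      have h1 := hmin e' he'
      simp only [div_one] at h1
      have h2 : Real.sqrt (spEca2 k ε (S.erase e')) ≤ Real.sqrt (spEca2 k ε (S.erase e)) := by
        linarith
      exact (Real.sqrt_le_sqrt_iff (spEca2_nonneg (le_of_lt hε) _)).mp h2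
    rcases hgood with ⟨F, rfl⟩ | ⟨F, i₀, b₀, hi₀, rfl⟩
    · -- full state
      have hFne : F.Nonempty := by
        by_contra hcon
        rw [Finset.not_nonempty_iff_eq_empty] at hcon
        subst hcon
        apply hover
        rw [sum_ones, card_SF]
        simp
      obtain ⟨i₀, hi₀⟩ := hFne
      have hc1 : 1 ≤ F.card := Finset.card_pos.mpr ⟨i₀, hi₀⟩
      rcases e with ⟨i, b⟩ | j
      · right
        exact ⟨F, i, b, by simpa using he, rfl⟩
      · exfalso
        have h1 := key (Sum.inl (i₀, true)) (by simp [hi₀])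
        rw [eca_state2 hk ε hi₀, eca_cut hk ε F j] at h1
        exact absurd h1 (not_le.mpr (cut_lt_erase_short hk hε hc1 j))
    · -- half state
      have hc1 : 1 ≤ F.card := Finset.card_pos.mpr ⟨i₀, hi₀⟩
      have he₂mem : Sum.inl (i₀, !b₀) ∈ (SF F).erase (Sum.inl (i₀, b₀)) := by
        rw [Finset.mem_erase]
        refine ⟨?_, by simp [hi₀]⟩
        intro hEq
        rw [Sum.inl.injEq, Prod.mk.injEq] at hEq
        cases b₀ <;> simp_all
      have herase : ((SF F).erase (Sum.inl (i₀, b₀))).erase (Sum.inl (i₀, !b₀))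
          = SF (F.erase i₀) := by
        ext x
        rcases x with ⟨i, b⟩ | j
        · simp only [Finset.mem_erase, inl_mem_SF]
          constructor
          · rintro ⟨h1, h2, h3⟩
            refine ⟨?_, h3⟩
            intro hEq; subst hEq
            cases b <;> cases b₀ <;> simp_all
          · rintro ⟨h1, h2⟩
            refine ⟨?_, ?_, h2⟩ <;> intro hEq <;>
              rw [Sum.inl.injEq, Prod.mk.injEq] at hEq <;> exact h1 hEq.1
        · simp only [Finset.mem_erase, inr_mem_SF]
          constructor
          · intro; trivial
          · intro
            refine ⟨by simp, by simp, trivial⟩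
      have hvalS : spEca2 k ε ((SF F).erase (Sum.inl (i₀, b₀)))
          = (1 + F.card + 2*k*ε)^2 + ((k:ℝ) - F.card + 1) := by
        cases b₀
        · exact eca_state3 hk ε hi₀
        · exact eca_state2 hk ε hi₀
      have hvalE : spEca2 k ε (((SF F).erase (Sum.inl (i₀, b₀))).erase (Sum.inl (i₀, !b₀)))
          = spEca2 k ε ((SF F).erase (Sum.inl (i₀, b₀))) := by
        rw [herase, eca_SF hk ε (F.erase i₀), hvalS, Finset.card_erase_of_mem hi₀,
          Nat.cast_sub hc1]
        push_cast; ring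
      have hge : spEca2 k ε ((SF F).erase (Sum.inl (i₀, b₀)))
          ≤ spEca2 k ε (((SF F).erase (Sum.inl (i₀, b₀))).erase e) := by
        rw [← hvalE]
        exact key _ he₂mem
      rcases e with ⟨i, b⟩ | j
      · by_cases hii : i = i₀
        · subst hii
          have hbb : b = !b₀ := by
            have h2 := Finset.mem_erase.mp he
            have h3 : (Sum.inl (i, b) : SpE k) ≠ Sum.inl (i, b₀) := h2.1
            cases b <;> cases b₀ <;> simp_all
          subst hbb
          exact Or.inl ⟨_, herase⟩
        · exfalso
          have hiF : i ∈ F := by simpa using (Finset.mem_erase.mp he).2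
          have htrue : Sum.inl (i, true) ∈ (SF F).erase (Sum.inl (i₀, b₀)) := by
            rw [Finset.mem_erase]
            refine ⟨?_, by simp [hiF]⟩
            intro hEq
            rw [Sum.inl.injEq, Prod.mk.injEq] at hEq
            exact hii hEq.1
          have hfalse : Sum.inl (i, false) ∈ (SF F).erase (Sum.inl (i₀, b₀)) := by
            rw [Finset.mem_erase]
            refine ⟨?_, by simp [hiF]⟩
            intro hEq
            rw [Sum.inl.injEq, Prod.mk.injEq] at hEq
            exact hii hEq.1
          have hreach : Reach k ((SF F).erase (Sum.inl (i₀, b₀)))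
              (Sum.inr (Sum.inl (i, true))) (Sum.inl ()) :=
            (reach_adj htrue (Or.inr (spEnds_true i))).trans
              (reach_adj hfalse (Or.inr (spEnds_false i)))
          have hnot : ¬ Reach k (((SF F).erase (Sum.inl (i₀, b₀))).erase (Sum.inl (i, b)))
              (Sum.inr (Sum.inl (i, true))) (Sum.inl ()) := by
            cases b
            · intro hcon
              have h3 := (branch_cut (i₀ := i) (Finset.notMem_erase _ _) hcon).mp (Or.inr rfl)
              rcases h3 with h3 | h3 <;> simp at h3
            · intro hcon
              have h3 := leaf_isolated (Finset.notMem_erase _ _) hcon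
              simp at h3
          have hdrop := spEca2_add_le (le_of_lt hε) (Finset.erase_subset _ _)
            (by simp) hreach hnot
          rw [spW_short, spW_ctr] at hdrop
          norm_num at hdrop
          linarith
      · exfalso
        have hends : spEnds k (Sum.inr j : SpE k)
            = ((spEnds k (Sum.inr j : SpE k)).1, Sum.inr (Sum.inr j)) := rfl
        have hreach : Reach k ((SF F).erase (Sum.inl (i₀, b₀)))
            (spEnds k (Sum.inr j : SpE k)).1 (Sum.inr (Sum.inr j)) :=
          reach_adj he (Or.inl hends)
        have hnot := long_edge_not_reach (ε := ε)
          (S := (((SF F).erase (Sum.inl (i₀, b₀))).erase (Sum.inr j)))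
          (j := j) (Finset.notMem_erase _ _)
        have hdrop := spEca2_add_le (le_of_lt hε) (Finset.erase_subset _ _)
          long_edge_fst_ne hreach hnot
        have hw1 := long_edge_fst_pos (ε := ε) hε j
        have hw2 : 0 < spW k ε (Sum.inr (Sum.inr j) : SpV k) := by
          rw [spW_lng]
          split <;> nlinarith
        nlinarith

end

end SpAux

open SpAux

/-- Neither incremental nor decremental greedy provides any constant-factor approximation
guarantee for BC-ECA-Opt, even on trees: for every `0 < α < 1` there is an instance
(a spider with `k` short branches of length 2 and one long branch of length `2k`, unit
costs, suitable budget `B` and small `ε > 0`) on which every solution returned by either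
greedy algorithm has ECA value strictly less than `α` times the optimal ECA value. -/
theorem stmt_11 :
    ∀ α : ℝ, 0 < α → α < 1 →
      ∃ (k : ℕ) (ε B : ℝ), 0 < k ∧ 0 < ε ∧ 0 ≤ B ∧
        ∀ S : Finset (SpE k),
          (IncGreedy (fun T => Real.sqrt (spEca2 k ε T)) (fun _ => 1) B ∅ S ∨
           DecGreedy (fun T => Real.sqrt (spEca2 k ε T)) (fun _ => 1) B Finset.univ S) →
          Real.sqrt (spEca2 k ε S)
            < α * sSup {x : ℝ | ∃ T : Finset (SpE k),
                (∑ a ∈ T, (1 : ℝ)) ≤ B ∧ Real.sqrt (spEca2 k ε T) = x} := by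
  intro α hα0 hα1
  set k : ℕ := ⌈(8:ℝ)/α^2⌉₊ + 7 with hkdef
  have hk : 0 < k := by omega
  have hkR : (0:ℝ) < k := by exact_mod_cast hk
  have hkne : (k:ℝ) ≠ 0 := ne_of_gt hkR
  set ε : ℝ := 1/(4*(k:ℝ)) with hedef
  have hε : 0 < ε := by rw [hedef]; positivity
  refine ⟨k, ε, ((2*k : ℕ) : ℝ), hk, hε, by positivity, ?_⟩
  intro S hS
  have hSlong : S ⊆ longE k := by
    rcases hS with hinc | hdec
    · exact inc_invariant hk hε hinc (Finset.empty_subset _)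
    · have hT := dec_invariant hk hε hdec (Or.inl ⟨Finset.univ, SF_univ.symm⟩)
      rw [hT]
      exact SF_empty_subset
  have h2ke : 2*(k:ℝ)*ε = 1/2 := by
    rw [hedef]
    field_simp
    ring
  have hALG2 : spEca2 k ε S ≤ (2 + 2*(k:ℝ)*ε)^2 + k := spEca2_long_le hk hε.le hSlong
  rw [h2ke] at hALG2
  have hALG2' : spEca2 k ε S ≤ (k:ℝ) + 7 := by nlinarith
  have hbdd : BddAbove {x : ℝ | ∃ T : Finset (SpE k),
      (∑ a ∈ T, (1:ℝ)) ≤ ((2*k : ℕ) : ℝ) ∧ Real.sqrt (spEca2 k ε T) = x} := by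
    refine Set.Finite.bddAbove (Set.Finite.subset
      (Set.finite_range (fun T : Finset (SpE k) => Real.sqrt (spEca2 k ε T))) ?_)
    rintro x ⟨T, -, rfl⟩
    exact ⟨T, rfl⟩
  have hmem : Real.sqrt (spEca2 k ε (SHF (Finset.univ : Finset (Fin k))))
      ∈ {x : ℝ | ∃ T : Finset (SpE k),
        (∑ a ∈ T, (1:ℝ)) ≤ ((2*k : ℕ) : ℝ) ∧ Real.sqrt (spEca2 k ε T) = x} := by
    refine ⟨SHF Finset.univ, ?_, rfl⟩
    rw [sum_ones, card_SHF_univ]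
  have hopt1 : ((k:ℝ)+1) ≤ Real.sqrt (spEca2 k ε (SHF (Finset.univ : Finset (Fin k)))) := by
    have h1 := eca_opt_ge (k := k) hk hε.le
    calc ((k:ℝ)+1) = Real.sqrt (((k:ℝ)+1)^2) := (Real.sqrt_sq (by positivity)).symm
      _ ≤ _ := Real.sqrt_le_sqrt h1
  have hopt : ((k:ℝ)+1) ≤ sSup {x : ℝ | ∃ T : Finset (SpE k),
      (∑ a ∈ T, (1:ℝ)) ≤ ((2*k : ℕ) : ℝ) ∧ Real.sqrt (spEca2 k ε T) = x} :=
    le_trans hopt1 (le_csSup hbdd hmem)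
  have hk8 : (8:ℝ)/α^2 ≤ (k:ℝ) := by
    have h1 : (8:ℝ)/α^2 ≤ (⌈(8:ℝ)/α^2⌉₊ : ℝ) := Nat.le_ceil _
    have h2 : ((⌈(8:ℝ)/α^2⌉₊ : ℕ) : ℝ) ≤ (k:ℝ) := by
      rw [hkdef]
      push_cast
      linarith
    linarith
  have hα2 : 0 < α^2 := by positivity
  have h8k : 8 ≤ α^2*(k:ℝ) := by
    rw [div_le_iff₀ hα2] at hk8
    nlinarith
  have hk7 : (7:ℝ) ≤ k := by
    rw [hkdef]
    push_cast
    linarith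
  have hnum : (k:ℝ) + 7 < (α*((k:ℝ)+1))^2 := by
    nlinarith
  have hALG : Real.sqrt (spEca2 k ε S) < α*((k:ℝ)+1) := by
    rw [Real.sqrt_lt' (by positivity)]
    linarith
  calc Real.sqrt (spEca2 k ε S) < α*((k:ℝ)+1) := hALG
    _ ≤ _ := mul_le_mul_of_nonneg_left hopt (le_of_lt hα0)
end

section
/- Improving two consecutive corridors can produce a super-additive gain in ECA²: there exists a graph (e.g. a path s—u—t with w_s = w_t = 1, w_u = 0, both arcs of probability 0 unimproved and probability p ∈ (0,1] improved) for which the increase in ECA² when both arcs are improved simultaneously (namely 2p²) is strictly greater than the sum of the increases when each arc is improved alone (namely 0 + 0). -/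
open scoped Classical

/-- The path graph `s — u — t` on `Fin 3` (vertices `0 — 1 — 2`): probability of the
(bidirectional) edge `e ∈ Fin 2` is `p` if `e` is improved (i.e. `e ∈ S`) and `0`
otherwise. -/
noncomputable def pathπ (p : ℝ) (S : Set (Fin 2)) (a b : Fin 3) : ℝ :=
  if ((a = 0 ∧ b = 1) ∨ (a = 1 ∧ b = 0)) ∧ (0 : Fin 2) ∈ S then p
  else if ((a = 1 ∧ b = 2) ∨ (a = 2 ∧ b = 1)) ∧ (1 : Fin 2) ∈ S then p
  else 0

/-- Vertex weights `w_s = w_t = 1`, `w_u = 0`. -/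
noncomputable def pathw : Fin 3 → ℝ := ![1, 0, 1]

/-- `ECA²` of the instance where the set `S` of edges has been improved. -/
noncomputable def eca2 (p : ℝ) (S : Set (Fin 2)) : ℝ :=
  ∑ s : Fin 3, ∑ t : Fin 3,
    pathw s * pathw t * conn (fun a b => pathπ p S a b ≠ 0) (pathπ p S) s t

section Aux

variable {V : Type*}

lemma pathRel_nonneg (π : V → V → ℝ) (h : ∀ a b, 0 ≤ π a b) :
    ∀ l : List V, 0 ≤ pathRel π l
  | [] => by simp [pathRel]
  | [_] => by simp [pathRel]
  | a :: b :: l => by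
      simpa [pathRel] using mul_nonneg (h a b) (pathRel_nonneg π h (b :: l))

lemma pathRel_le_one (π : V → V → ℝ) (h0 : ∀ a b, 0 ≤ π a b) (h1 : ∀ a b, π a b ≤ 1) :
    ∀ l : List V, pathRel π l ≤ 1
  | [] => by simp [pathRel]
  | [_] => by simp [pathRel]
  | a :: b :: l => by
      have := mul_le_one₀ (h1 a b) (pathRel_nonneg π h0 (b :: l))
        (pathRel_le_one π h0 h1 (b :: l))
      simpa [pathRel] using this

lemma conn_eq (adj : V → V → Prop) (π : V → V → ℝ) (s t : V) (c : ℝ) (hc : 0 ≤ c)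
    (hw : ∃ l, IsPath adj s t l ∧ pathRel π l = c)
    (hb : ∀ l, IsPath adj s t l → pathRel π l ≤ c) :
    conn adj π s t = c := by
  obtain ⟨l, hl, hlr⟩ := hw
  have hub : ∀ x ∈ ({x | ∃ p, IsPath adj s t p ∧ pathRel π p = x} ∪ {0} : Set ℝ), x ≤ c := by
    rintro x (⟨q, hq, rfl⟩ | rfl)
    · exact hb q hq
    · exact hc
  apply le_antisymm
  · exact csSup_le ⟨0, Or.inr rfl⟩ hub
  · exact hlr ▸ le_csSup ⟨c, hub⟩ (Or.inl ⟨l, hl, rfl⟩)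

lemma conn_zero (adj : V → V → Prop) (π : V → V → ℝ) (s t : V)
    (hb : ∀ l, ¬ IsPath adj s t l) :
    conn adj π s t = 0 := by
  have : ({x | ∃ p, IsPath adj s t p ∧ pathRel π p = x} : Set ℝ) = ∅ := by
    ext x; simp only [Set.mem_setOf_eq, Set.mem_empty_iff_false, iff_false]
    rintro ⟨q, hq, -⟩; exact hb q hq
  rw [conn, this]; simp

lemma conn_self_s16 (adj : V → V → Prop) (π : V → V → ℝ) (s : V)
    (h0 : ∀ a b, 0 ≤ π a b) (h1 : ∀ a b, π a b ≤ 1) :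
    conn adj π s s = 1 := by
  refine conn_eq adj π s s 1 zero_le_one ⟨[s], ⟨rfl, rfl⟩, by simp [pathRel]⟩ ?_
  exact fun l _ => pathRel_le_one π h0 h1 l

lemma no_in (adj : V → V → Prop) (v : V) (hv : ∀ a, ¬ adj a v) :
    ∀ l : List V, ∀ s, s ≠ v → ¬ IsPath adj s v l := by
  intro l
  induction l with
  | nil => intro s _ h; exact h
  | cons a tl ih =>
      intro s hs h
      match tl, h with
      | [], ⟨h1, h2⟩ => exact hs (h1 ▸ h2)
      | b :: tl', ⟨_, hab, hrest⟩ =>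
          have hbv : b ≠ v := fun hbv => hv a (hbv ▸ hab)
          exact ih b hbv hrest

lemma no_out (adj : V → V → Prop) (v : V) (hv : ∀ b, ¬ adj v b) :
    ∀ l : List V, ∀ t, v ≠ t → ¬ IsPath adj v t l := by
  intro l t hvt h
  match l, h with
  | [], h => exact h
  | [a], ⟨h1, h2⟩ => exact hvt (h1 ▸ h2)
  | a :: b :: tl, ⟨ha, hab, _⟩ => exact hv b (ha ▸ hab)

lemma pathRel_pow (π : V → V → ℝ) (p : ℝ) (hπ : ∀ a b, π a b ≠ 0 → π a b = p) :
    ∀ l : List V, ∀ s t, IsPath (fun a b => π a b ≠ 0) s t l →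
      pathRel π l = p ^ (l.length - 1) := by
  intro l
  induction l with
  | nil => intro s t h; exact h.elim
  | cons a tl ih =>
      intro s t h
      match tl, h with
      | [], _ => simp [pathRel]
      | b :: tl', ⟨_, hab, hrest⟩ =>
          have := ih b t hrest
          simp only [pathRel, this, hπ a b hab, List.length_cons]
          simp only [Nat.add_sub_cancel, pow_succ]
          ring

lemma len_ge_three (adj : V → V → Prop) (s t : V) (hst : s ≠ t) (hadj : ¬ adj s t) :
    ∀ l : List V, IsPath adj s t l → 3 ≤ l.length := by
  intro l h
  match l, h with
  | [a], ⟨h1, h2⟩ => exact absurd (h1.symm.trans h2) hst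
  | [a, b], ⟨ha, hab, hb1, hb2⟩ => exact absurd ((ha ▸ hb2 ▸ hab : adj s t)) hadj
  | a :: b :: c :: r, _ => simp

end Aux
section Main

variable {p : ℝ}

lemma pathπ_nonneg (hp0 : 0 < p) (S : Set (Fin 2)) : ∀ a b, 0 ≤ pathπ p S a b := by
  intro a b; unfold pathπ; split_ifs <;> linarith

lemma pathπ_le_one (hp1 : p ≤ 1) (S : Set (Fin 2)) : ∀ a b, pathπ p S a b ≤ 1 := by
  intro a b; unfold pathπ; split_ifs <;> linarith

lemma pathπ_empty : ∀ a b, pathπ p ∅ a b = 0 := by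
  intro a b; simp [pathπ]

lemma pathπ_ne (S : Set (Fin 2)) : ∀ a b, pathπ p S a b ≠ 0 → pathπ p S a b = p := by
  intro a b; unfold pathπ; split_ifs <;> tauto

-- vertex 2 isolated when S = {0}
lemma pathπ_zero_to2 : ∀ a : Fin 3, pathπ p {0} a 2 = 0 := by
  intro a; unfold pathπ
  fin_cases a <;> simp

lemma pathπ_zero_from2 : ∀ b : Fin 3, pathπ p {0} 2 b = 0 := by
  intro b; unfold pathπ
  fin_cases b <;> simp

-- vertex 0 isolated when S = {1}
lemma pathπ_one_to0 : ∀ a : Fin 3, pathπ p {1} a 0 = 0 := by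
  intro a; unfold pathπ
  fin_cases a <;> simp

lemma pathπ_one_from0 : ∀ b : Fin 3, pathπ p {1} 0 b = 0 := by
  intro b; unfold pathπ
  fin_cases b <;> simp

lemma pathπ_both_01 : pathπ p {0, 1} 0 1 = p := by
  unfold pathπ; simp

lemma pathπ_both_12 : pathπ p {0, 1} 1 2 = p := by
  unfold pathπ; simp [Fin.ext_iff]

lemma pathπ_both_02 : pathπ p {0, 1} 0 2 = 0 := by
  unfold pathπ; simp [Fin.ext_iff]

lemma pathπ_both_20 : pathπ p {0, 1} 2 0 = 0 := by
  unfold pathπ; simp [Fin.ext_iff]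

lemma pathπ_both_10 : pathπ p {0, 1} 1 0 = p := by
  unfold pathπ; simp

lemma pathπ_both_21 : pathπ p {0, 1} 2 1 = p := by
  unfold pathπ; simp [Fin.ext_iff]

lemma conn_both (hp0 : 0 < p) (hp1 : p ≤ 1) (s t : Fin 3)
    (h02 : pathπ p {0,1} s t = 0) (hst : s ≠ t)
    (hw : ∃ l, IsPath (fun a b => pathπ p {0,1} a b ≠ 0) s t l ∧
      pathRel (pathπ p {0,1}) l = p ^ 2) :
    conn (fun a b => pathπ p {0,1} a b ≠ 0) (pathπ p {0,1}) s t = p ^ 2 := by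
  refine conn_eq _ _ s t (p ^ 2) (by positivity) hw ?_
  intro l hl
  rw [pathRel_pow (pathπ p {0,1}) p (pathπ_ne _) l s t hl]
  have h3 : 3 ≤ l.length :=
    len_ge_three _ s t hst (by simpa using h02) l hl
  exact pow_le_pow_of_le_one hp0.le hp1 (by omega)
lemma eca2_expand (p : ℝ) (S : Set (Fin 2)) :
    eca2 p S = conn (fun a b => pathπ p S a b ≠ 0) (pathπ p S) 0 0
      + conn (fun a b => pathπ p S a b ≠ 0) (pathπ p S) 0 2
      + conn (fun a b => pathπ p S a b ≠ 0) (pathπ p S) 2 0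
      + conn (fun a b => pathπ p S a b ≠ 0) (pathπ p S) 2 2 := by
  simp [eca2, Fin.sum_univ_three, pathw]
  ring

theorem stmt_16' (p : ℝ) (hp0 : 0 < p) (hp1 : p ≤ 1) :
    eca2 p ∅ = 2 ∧ eca2 p {0} = 2 ∧ eca2 p {1} = 2 ∧ eca2 p {0,1} = 2 + 2 * p ^ 2 := by
  have hne : (p : ℝ) ≠ 0 := hp0.ne'
  refine ⟨?_, ?_, ?_, ?_⟩
  · rw [eca2_expand]
    rw [conn_self_s16 _ _ _ (pathπ_nonneg hp0 _) (pathπ_le_one hp1 _),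
      conn_self_s16 _ _ _ (pathπ_nonneg hp0 _) (pathπ_le_one hp1 _),
      conn_zero _ _ _ _ (fun l => no_out _ 0 (by simp [pathπ_empty]) l 2 (by decide)),
      conn_zero _ _ _ _ (fun l => no_out _ 2 (by simp [pathπ_empty]) l 0 (by decide))]
    norm_num
  · rw [eca2_expand]
    rw [conn_self_s16 _ _ _ (pathπ_nonneg hp0 _) (pathπ_le_one hp1 _),
      conn_self_s16 _ _ _ (pathπ_nonneg hp0 _) (pathπ_le_one hp1 _),
      conn_zero _ _ _ _ (fun l => no_in _ 2 (by simp [pathπ_zero_to2]) l 0 (by decide)),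
      conn_zero _ _ _ _ (fun l => no_out _ 2 (by simp [pathπ_zero_from2]) l 0 (by decide))]
    norm_num
  · rw [eca2_expand]
    rw [conn_self_s16 _ _ _ (pathπ_nonneg hp0 _) (pathπ_le_one hp1 _),
      conn_self_s16 _ _ _ (pathπ_nonneg hp0 _) (pathπ_le_one hp1 _),
      conn_zero _ _ _ _ (fun l => no_out _ 0 (by simp [pathπ_one_from0]) l 2 (by decide)),
      conn_zero _ _ _ _ (fun l => no_in _ 0 (by simp [pathπ_one_to0]) l 2 (by decide))]
    norm_num
  · rw [eca2_expand]
    rw [conn_self_s16 _ _ _ (pathπ_nonneg hp0 _) (pathπ_le_one hp1 _),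
      conn_self_s16 _ _ _ (pathπ_nonneg hp0 _) (pathπ_le_one hp1 _),
      conn_both hp0 hp1 0 2 pathπ_both_02 (by decide)
        ⟨[0, 1, 2], ⟨rfl, by show pathπ p {0,1} 0 1 ≠ 0; rw [pathπ_both_01]; exact hne, rfl,
          by show pathπ p {0,1} 1 2 ≠ 0; rw [pathπ_both_12]; exact hne, rfl, rfl⟩,
          by simp [pathRel, pathπ_both_01, pathπ_both_12]; ring⟩,
      conn_both hp0 hp1 2 0 pathπ_both_20 (by decide)
        ⟨[2, 1, 0], ⟨rfl, by show pathπ p {0,1} 2 1 ≠ 0; rw [pathπ_both_21]; exact hne, rfl,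
          by show pathπ p {0,1} 1 0 ≠ 0; rw [pathπ_both_10]; exact hne, rfl, rfl⟩,
          by simp [pathRel, pathπ_both_21, pathπ_both_10]; ring⟩]
    ring

/-- Improving two consecutive corridors can produce a super-additive gain in `ECA²`:
on the path `s — u — t` with `w_s = w_t = 1`, `w_u = 0` and both edges of probability `0`
unimproved and `p ∈ (0,1]` improved, the increase of `ECA²` when both edges are improved
simultaneously is `2p²`, while improving either edge alone yields an increase of `0`;
in particular the joint gain strictly exceeds the sum of the individual gains. -/
theorem stmt_16 (p : ℝ) (hp0 : 0 < p) (hp1 : p ≤ 1) :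
    eca2 p {0, 1} - eca2 p ∅ = 2 * p ^ 2 ∧
    eca2 p {0} - eca2 p ∅ = 0 ∧
    eca2 p {1} - eca2 p ∅ = 0 ∧
    eca2 p {0, 1} - eca2 p ∅ > (eca2 p {0} - eca2 p ∅) + (eca2 p {1} - eca2 p ∅) := by
  obtain ⟨h1, h2, h3, h4⟩ := stmt_16' p hp0 hp1
  rw [h1, h2, h3, h4]
  refine ⟨by ring, by ring, by ring, by nlinarith⟩
end Main
end
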